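/- arXiv:1605.06530 — 2 statements merged into one kernel-verified Lean document; each statement's English description precedes it below -/
import Mathlib

section
/- For each n ≥ 3 let G_n be the wheel graph with n leaves: a hub H joined by weight-1 edges to each of n leaves arranged in a cycle, each leaf also joined by weight-1 edges to its two cyclically adjacent leaves, all other weights zero. Let (b/c)*(n) denote the critical benefit-to-cost ratio of G_n. Then (b/c)*(n) converges as n → ∞ and lim_{n→∞} (b/c)*(n) = (429 + 90√5)/82. -/
open Finset Filter Asymptotics

noncomputable section

namespace EvoGraph

variable {V : Type*} [Fintype V] [DecidableEq V]

/-- Weighted degree `w_i = ∑_j w_{ij}`. -/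
def deg (w : V → V → ℝ) (i : V) : ℝ := ∑ j, w i j

/-- Total edge weight `W = ∑_i w_i`. -/
def Wtot (w : V → V → ℝ) : ℝ := ∑ i, deg w i

/-- Random-walk step probability `p_{ij} = w_{ij}/w_i`. -/
def step (w : V → V → ℝ) (i j : V) : ℝ := w i j / deg w i

/-- The stochastic matrix `(p_{ij})`. -/
def stepMat (w : V → V → ℝ) : Matrix V V ℝ := Matrix.of fun i j => step w i j

/-- `n`-step probability `p^{(n)}_{ij}`: the `(i,j)` entry of the `n`-th power of `(p_{ij})`. -/
def stepN (w : V → V → ℝ) (n : ℕ) (i j : V) : ℝ := (stepMat w ^ n) i j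

/-- Stationary distribution `π_i = w_i / W`. -/
def statDist (w : V → V → ℝ) (i : V) : ℝ := deg w i / Wtot w

/-- `w` is a finite connected weighted graph: symmetric nonnegative weights
(self-loops allowed), positive weighted degrees, and any two vertices joined by
a path of edges of positive weight. -/
def IsWeightedGraph (w : V → V → ℝ) : Prop :=
  (∀ i j, w i j = w j i) ∧ (∀ i j, 0 ≤ w i j) ∧ (∀ i, 0 < deg w i) ∧
  ∀ i j : V, Relation.ReflTransGen (fun a b => 0 < w a b) i j

/-- `τ` is the (symmetric) solution of the coalescence-time system:
`τ_{ii} = 0`, and `τ_{ij} = 1 + (1/2) ∑_k (p_{ik} τ_{kj} + p_{jk} τ_{ik})` for `i ≠ j`. -/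
def IsCoalescent (w : V → V → ℝ) (τ : V → V → ℝ) : Prop :=
  (∀ i j, τ i j = τ j i) ∧ (∀ i, τ i i = 0) ∧
  ∀ i j, i ≠ j →
    τ i j = 1 + (1 / 2) * ∑ k, (step w i k * τ k j + step w j k * τ i k)

/-- `τ^{(n)} = ∑_{i,j} π_i p^{(n)}_{ij} τ_{ij}`. -/
def tauWalk (w τ : V → V → ℝ) (n : ℕ) : ℝ :=
  ∑ i, ∑ j, statDist w i * stepN w n i j * τ i j

/-- Remeeting time `τ⁺_i = 1 + ∑_j p_{ij} τ_{ij}`. -/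
def remeet (w τ : V → V → ℝ) (i : V) : ℝ := 1 + ∑ j, step w i j * τ i j

/-- The wheel graph with `n` leaves: hub `none`; leaves `some a` with
`a : Fin n` arranged in a cycle. Each leaf is joined to the hub and to its two
cyclically adjacent leaves by weight-1 edges; all other weights are zero. -/
def wheelW (n : ℕ) [NeZero n] : Option (Fin n) → Option (Fin n) → ℝ
  | none, some _ => 1
  | some _, none => 1
  | some a, some b => if b = a + 1 ∨ a = b + 1 then 1 else 0
  | none, none => 0

/-! ### Auxiliary development -/

/-- The root `r = (3+√5)/2` of `x² - 3x + 1 = 0`. -/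
def rt : ℝ := (3 + Real.sqrt 5) / 2

lemma sqrt5_pos : (0:ℝ) < Real.sqrt 5 := Real.sqrt_pos.mpr (by norm_num)

lemma sqrt5_sq : Real.sqrt 5 ^ 2 = 5 := Real.sq_sqrt (by norm_num)

lemma sqrt5_gt_two : (2:ℝ) < Real.sqrt 5 := by
  nlinarith [sqrt5_sq, sqrt5_pos]

lemma one_lt_rt : (1:ℝ) < rt := by
  unfold rt; nlinarith [sqrt5_pos]

lemma rt_pos : (0:ℝ) < rt := lt_trans one_pos one_lt_rt

lemma rt_sq : rt ^ 2 = 3 * rt - 1 := by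
  unfold rt; nlinarith [sqrt5_sq]

lemma rt_pow_pos (m : ℕ) : (0:ℝ) < rt ^ m := pow_pos rt_pos m

lemma one_add_rt_pow_pos (m : ℕ) : (0:ℝ) < 1 + rt ^ m := by
  have := rt_pow_pos m; linarith

/-- `c_n = (1+r)(rⁿ-1)/((r-1)(1+rⁿ))`. -/
def ccw (n : ℕ) : ℝ := (1 + rt) * (rt ^ n - 1) / ((rt - 1) * (1 + rt ^ n))

lemma ccw_nonneg (n : ℕ) : 0 ≤ ccw n := by
  have h1 : (1:ℝ) ≤ rt ^ n := one_le_pow₀ one_lt_rt.le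
  have := one_lt_rt
  have := rt_pos
  apply div_nonneg <;> nlinarith [one_add_rt_pow_pos n]

/-- `A n`: coalescence time between hub and a leaf. -/
def Aw (n : ℕ) : ℝ := (15 * n - 9 * ccw n) / (n + 3 * ccw n)

/-- `F n d`: coalescence time between leaves at cyclic distance `d`. -/
def Fw (n : ℕ) (d : ℕ) : ℝ :=
  (3 + Aw n) * (1 - (rt ^ d + rt ^ (n - d)) / (1 + rt ^ n))

lemma Fw_zero (n : ℕ) : Fw n 0 = 0 := by
  unfold Fw
  rw [Nat.sub_zero, pow_zero]
  have := (one_add_rt_pow_pos n).ne'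
  field_simp
  ring

lemma Fw_n (n : ℕ) : Fw n n = 0 := by
  unfold Fw
  rw [Nat.sub_self, pow_zero]
  have := (one_add_rt_pow_pos n).ne'
  field_simp
  ring

lemma Fw_refl (n d : ℕ) (hd : d ≤ n) : Fw n (n - d) = Fw n d := by
  unfold Fw
  rw [Nat.sub_sub_self hd]
  ring
/-! ### Fin helpers -/

section FinHelpers
variable {n : ℕ} [NeZero n]

lemma fin_val_one (hn : 3 ≤ n) : ((1 : Fin n) : ℕ) = 1 := by
  rw [Fin.val_one']
  exact Nat.mod_eq_of_lt (by omega)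

lemma fin_val_add (a b : Fin n) : ((a + b : Fin n) : ℕ) = (a.val + b.val) % n := by
  rw [Fin.add_def]

lemma fin_val_sub (a b : Fin n) : ((a - b : Fin n) : ℕ) = (n - b.val + a.val) % n := by
  rw [Fin.sub_def]

lemma fin_val_add_one (hn : 3 ≤ n) (e : Fin n) :
    ((e + 1 : Fin n) : ℕ) = if e.val = n - 1 then 0 else e.val + 1 := by
  rw [fin_val_add, fin_val_one hn]
  have hlt := e.isLt
  split
  · next h => rw [h]; simp [Nat.sub_add_cancel (by omega : 1 ≤ n)]
  · next h => exact Nat.mod_eq_of_lt (by omega)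

lemma fin_val_sub_one (hn : 3 ≤ n) (e : Fin n) :
    ((e - 1 : Fin n) : ℕ) = if e.val = 0 then n - 1 else e.val - 1 := by
  rw [fin_val_sub, fin_val_one hn]
  have hlt := e.isLt
  split
  · next h => rw [h]; exact Nat.mod_eq_of_lt (by omega)
  · next h =>
      rw [Nat.mod_eq_sub_mod (by omega)]
      have h2 : n - 1 + e.val - n = e.val - 1 := by omega
      rw [h2]
      exact Nat.mod_eq_of_lt (by omega)

lemma fin_val_neg (hn : 3 ≤ n) (e : Fin n) (he : e ≠ 0) :
    ((-e : Fin n) : ℕ) = n - e.val := by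
  have h0 : (-e : Fin n) = 0 - e := by abel
  have h1 : e.val ≠ 0 := fun h => he (Fin.ext h)
  have hlt := e.isLt
  rw [h0, fin_val_sub]
  simp only [Fin.val_zero, Nat.add_zero]
  exact Nat.mod_eq_of_lt (by omega)

lemma fin_two_ne_zero (hn : 3 ≤ n) : (1 + 1 : Fin n) ≠ 0 := by
  intro h
  have hv := congrArg Fin.val h
  rw [fin_val_add, fin_val_one hn] at hv
  rw [Nat.mod_eq_of_lt (by omega)] at hv
  simp at hv

lemma fin_add_one_ne_sub_one (hn : 3 ≤ n) (a : Fin n) : a + 1 ≠ a - 1 := by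
  intro h
  have h2 : (1 : Fin n) + 1 = 0 := by
    have h3 : a + 1 - (a - 1) = 0 := by rw [h]; abel
    calc (1:Fin n) + 1 = a + 1 - (a - 1) := by abel
    _ = 0 := h3
  exact fin_two_ne_zero hn h2

end FinHelpers

/-! ### Wheel graph basics -/

section Wheel
variable {n : ℕ} [NeZero n] (hn : 3 ≤ n)

lemma wheel_deg_none : deg (wheelW n) none = n := by
  unfold deg
  rw [Fintype.sum_option]
  simp [wheelW]

lemma wheel_deg_some (a : Fin n) (hn : 3 ≤ n) : deg (wheelW n) (some a) = 3 := by
  unfold deg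
  rw [Fintype.sum_option]
  have h1 : (wheelW n (some a) none) = 1 := rfl
  have h2 : ∀ b : Fin n, wheelW n (some a) (some b) =
      if b = a + 1 ∨ a = b + 1 then 1 else 0 := fun b => rfl
  rw [h1]
  have h3 : ∀ b : Fin n, (b = a + 1 ∨ a = b + 1) ↔ b ∈ ({a + 1, a - 1} : Finset (Fin n)) := by
    intro b
    simp only [Finset.mem_insert, Finset.mem_singleton]
    constructor
    · rintro (h | h)
      · exact Or.inl h
      · right; rw [h]; abel
    · rintro (h | h)
      · exact Or.inl h
      · right; rw [h]; abel
  have h4 : ∑ b : Fin n, wheelW n (some a) (some b)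
      = ∑ b : Fin n, if b ∈ ({a + 1, a - 1} : Finset (Fin n)) then (1:ℝ) else 0 := by
    refine Finset.sum_congr rfl fun b _ => ?_
    rw [h2 b]
    simp only [h3 b]
  rw [h4, Finset.sum_ite_mem, Finset.univ_inter,
    Finset.sum_pair (fin_add_one_ne_sub_one hn a)]
  norm_num

lemma wheel_step_none_none : step (wheelW n) none none = 0 := by
  unfold step; simp [wheelW]

lemma wheel_step_none_some (b : Fin n) : step (wheelW n) none (some b) = 1 / n := by
  unfold step
  rw [wheel_deg_none]
  rfl

lemma wheel_step_some_none (a : Fin n) (hn : 3 ≤ n) :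
    step (wheelW n) (some a) none = 1 / 3 := by
  unfold step
  rw [wheel_deg_some a hn]
  rfl

lemma wheel_step_some_some (a b : Fin n) (hn : 3 ≤ n) :
    step (wheelW n) (some a) (some b) = (if b = a + 1 ∨ a = b + 1 then 1 else 0) / 3 := by
  unfold step
  rw [wheel_deg_some a hn]
  rfl

/-- Master sum lemma for a hub row. -/
lemma sum_step_hub (X : Option (Fin n) → ℝ) :
    ∑ k, step (wheelW n) none k * X k = (∑ b : Fin n, X (some b)) / n := by
  rw [Fintype.sum_option, wheel_step_none_none]
  have : ∀ b : Fin n, step (wheelW n) none (some b) * X (some b) = X (some b) / n := by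
    intro b; rw [wheel_step_none_some]; ring
  rw [Finset.sum_congr rfl fun b _ => this b]
  rw [← Finset.sum_div]
  ring

/-- Master sum lemma for a leaf row. -/
lemma sum_step_leaf (hn : 3 ≤ n) (a : Fin n) (X : Option (Fin n) → ℝ) :
    ∑ k, step (wheelW n) (some a) k * X k
      = (X none + X (some (a + 1)) + X (some (a - 1))) / 3 := by
  rw [Fintype.sum_option, wheel_step_some_none a hn]
  have key : ∑ b : Fin n, step (wheelW n) (some a) (some b) * X (some b)
      = (X (some (a+1)) + X (some (a-1))) / 3 := by
    have h3 : ∀ b : Fin n, (b = a + 1 ∨ a = b + 1) ↔ b ∈ ({a + 1, a - 1} : Finset (Fin n)) := by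
      intro b
      simp only [Finset.mem_insert, Finset.mem_singleton]
      constructor
      · rintro (h | h)
        · exact Or.inl h
        · right; rw [h]; abel
      · rintro (h | h)
        · exact Or.inl h
        · right; rw [h]; abel
    have h4 : ∀ b : Fin n, step (wheelW n) (some a) (some b) * X (some b)
        = if b ∈ ({a + 1, a - 1} : Finset (Fin n)) then X (some b) / 3 else 0 := by
      intro b
      rw [wheel_step_some_some a b hn]
      simp only [← h3 b]
      split <;> simp <;> ring
    rw [Finset.sum_congr rfl fun b _ => h4 b, Finset.sum_ite_mem, Finset.univ_inter,
      Finset.sum_pair (fin_add_one_ne_sub_one hn a)]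
    ring
  rw [key]
  ring

/-- Shifted sums over `Fin n`. -/
lemma sum_shift (a : Fin n) (X : Fin n → ℝ) : ∑ c : Fin n, X (c - a) = ∑ k : Fin n, X k := by
  exact Fintype.sum_equiv (Equiv.subRight a) _ _ fun c => rfl

end Wheel
/-! ### The explicit coalescence times -/

/-- `S n = ∑_{k} F n k`. -/
def Sw (n : ℕ) : ℝ := ∑ k : Fin n, Fw n k.val

lemma rt_ne_one : rt ≠ 1 := ne_of_gt one_lt_rt

lemma geom1 (n : ℕ) : ∑ k ∈ Finset.range n, rt ^ k = (rt ^ n - 1) / (rt - 1) :=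
  geom_sum_eq rt_ne_one n

lemma geom2 {n : ℕ} (hn : 1 ≤ n) :
    ∑ k ∈ Finset.range n, rt ^ (n - k) = rt * ((rt ^ n - 1) / (rt - 1)) := by
  rw [← Finset.sum_range_reflect]
  have h1 : ∀ k ∈ Finset.range n, rt ^ (n - (n - 1 - k)) = rt * rt ^ k := by
    intro k hk
    rw [Finset.mem_range] at hk
    have : n - (n - 1 - k) = k + 1 := by omega
    rw [this, pow_succ]
    ring
  rw [Finset.sum_congr rfl h1, ← Finset.mul_sum, geom1]

lemma Sw_eq {n : ℕ} (hn : 1 ≤ n) : Sw n = (3 + Aw n) * (n - ccw n) := by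
  have hP : (1 + rt ^ n) ≠ 0 := (one_add_rt_pow_pos n).ne'
  have hr1 : rt - 1 ≠ 0 := sub_ne_zero.mpr rt_ne_one
  unfold Sw Fw
  rw [← Finset.mul_sum]
  congr 1
  have expand : ∀ k : Fin n, (1 - (rt ^ k.val + rt ^ (n - k.val)) / (1 + rt ^ n))
      = 1 - rt ^ k.val / (1 + rt ^ n) - rt ^ (n - k.val) / (1 + rt ^ n) := by
    intro k; ring
  rw [Finset.sum_congr rfl fun k _ => expand k]
  rw [Finset.sum_sub_distrib, Finset.sum_sub_distrib, Finset.sum_const,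
    Finset.card_univ, Fintype.card_fin, ← Finset.sum_div, ← Finset.sum_div]
  have g1 : ∑ k : Fin n, rt ^ k.val = (rt ^ n - 1) / (rt - 1) := by
    rw [Fin.sum_univ_eq_sum_range (fun k => rt ^ k) n]; exact geom1 n
  have g2 : ∑ k : Fin n, rt ^ (n - k.val) = rt * ((rt ^ n - 1) / (rt - 1)) := by
    rw [Fin.sum_univ_eq_sum_range (fun k => rt ^ (n - k)) n]; exact geom2 hn
  rw [g1, g2]
  unfold ccw
  field_simp
  ring

lemma A_denom_pos {n : ℕ} (hn : 1 ≤ n) : 0 < (n : ℝ) + 3 * ccw n := by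
  have := ccw_nonneg n
  have : (1:ℝ) ≤ n := by exact_mod_cast hn
  linarith [ccw_nonneg n]

lemma A_id {n : ℕ} (hn : 1 ≤ n) : Aw n * (n + 3 * ccw n) = 15 * n - 9 * ccw n := by
  unfold Aw
  rw [div_mul_cancel₀]
  exact (A_denom_pos hn).ne'

/-- The key hub identity `4n·A = 6n + 3S`. -/
lemma key1 {n : ℕ} (hn : 1 ≤ n) : 4 * n * Aw n = 6 * n + 3 * Sw n := by
  have hS := Sw_eq hn
  have hA := A_id hn
  linear_combination -3 * hS + hA

/-- The recurrence `F d = 1 + (A + F (d-1) + F (d+1))/3` for `1 ≤ d ≤ n-1`. -/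
lemma Fw_rec {n d : ℕ} (hd1 : 1 ≤ d) (hd2 : d ≤ n - 1) (hn : 2 ≤ n) :
    Fw n d = 1 + (1 / 3) * (Aw n + Fw n (d - 1) + Fw n (d + 1)) := by
  have hP : (1 + rt ^ n) ≠ 0 := (one_add_rt_pow_pos n).ne'
  set m := n - d with hm
  have hm1 : 1 ≤ m := by omega
  have hnd1 : n - (d - 1) = m + 1 := by omega
  have hnd2 : n - (d + 1) = m - 1 := by omega
  obtain ⟨e, he⟩ : ∃ e, d = e + 1 := ⟨d - 1, by omega⟩
  obtain ⟨f, hf⟩ : ∃ f, m = f + 1 := ⟨m - 1, by omega⟩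
  have e1 : rt ^ (d - 1) + rt ^ (d + 1) = 3 * rt ^ d := by
    subst he
    simp only [Nat.add_sub_cancel]
    have : e + 1 + 1 = e + 2 := rfl
    rw [this, pow_add, pow_add, pow_one]
    linear_combination rt ^ e * rt_sq
  have e2 : rt ^ (m - 1) + rt ^ (m + 1) = 3 * rt ^ m := by
    rw [hf]
    simp only [Nat.add_sub_cancel]
    have hx : f + 1 + 1 = f + 2 := rfl
    rw [hx, pow_add, pow_add, pow_one]
    linear_combination rt ^ f * rt_sq
  have h2 : Fw n (d - 1) + Fw n (d + 1)
      = (3 + Aw n) * (2 - 3 * ((rt ^ d + rt ^ m) / (1 + rt ^ n))) := by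
    unfold Fw
    rw [hnd1, hnd2]
    field_simp
    linear_combination (-(3 + Aw n)) * (e1 + e2)
  have h3 : Fw n d = (3 + Aw n) * (1 - (rt ^ d + rt ^ m) / (1 + rt ^ n)) := by
    unfold Fw; rw [← hm]
  linear_combination h3 - (1 / 3) * h2

/-! ### The wheel coalescence times -/

def tauWheel (n : ℕ) [NeZero n] : Option (Fin n) → Option (Fin n) → ℝ
  | none, none => 0
  | none, some _ => Aw n
  | some _, none => Aw n
  | some a, some b => Fw n ((b - a : Fin n) : ℕ)

section Coal
variable {n : ℕ} [NeZero n]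

lemma sum_shift' (a : Fin n) (X : Fin n → ℝ) :
    ∑ c : Fin n, X (a - c) = ∑ k : Fin n, X k :=
  Fintype.sum_equiv (Equiv.subLeft a) _ _ fun c => rfl

lemma tauWheel_symm (hn : 3 ≤ n) (i j : Option (Fin n)) :
    tauWheel n i j = tauWheel n j i := by
  match i, j with
  | none, none => rfl
  | none, some b => rfl
  | some a, none => rfl
  | some a, some b =>
    show Fw n ((b - a : Fin n) : ℕ) = Fw n ((a - b : Fin n) : ℕ)
    by_cases hab : a = b
    · subst hab; rfl
    · have hne : b - a ≠ 0 := sub_ne_zero.mpr (Ne.symm hab)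
      have hneg : a - b = -(b - a) := by abel
      rw [hneg, fin_val_neg hn _ hne]
      rw [Fw_refl n _ (le_of_lt (b - a).isLt)]

lemma tauWheel_diag (i : Option (Fin n)) : tauWheel n i i = 0 := by
  match i with
  | none => rfl
  | some a =>
    show Fw n ((a - a : Fin n) : ℕ) = 0
    rw [sub_self]
    exact Fw_zero n

lemma tauWheel_coal (hn : 3 ≤ n) : IsCoalescent (wheelW n) (tauWheel n) := by
  refine ⟨tauWheel_symm hn, tauWheel_diag, ?_⟩
  have hn' : (n:ℝ) ≠ 0 := by positivity
  intro i j hij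
  rw [Finset.sum_add_distrib]
  match i, j with
  | none, none => exact absurd rfl hij
  | none, some b =>
    show Aw n = 1 + 1 / 2 * (∑ k, step (wheelW n) none k * tauWheel n k (some b)
      + ∑ k, step (wheelW n) (some b) k * tauWheel n none k)
    rw [sum_step_hub, sum_step_leaf hn]
    have hsum : ∑ c : Fin n, tauWheel n (some c) (some b) = Sw n := by
      show ∑ c : Fin n, Fw n ((b - c : Fin n) : ℕ) = Sw n
      exact sum_shift' b (fun k => Fw n k.val)
    rw [hsum]
    show Aw n = 1 + 1/2 * (Sw n / n + (0 + Aw n + Aw n)/3)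
    have hk := key1 (n := n) (by omega)
    field_simp
    linear_combination hk
  | some a, none =>
    show Aw n = 1 + 1 / 2 * (∑ k, step (wheelW n) (some a) k * tauWheel n k none
      + ∑ k, step (wheelW n) none k * tauWheel n (some a) k)
    rw [sum_step_hub, sum_step_leaf hn]
    have hsum : ∑ c : Fin n, tauWheel n (some a) (some c) = Sw n := by
      show ∑ c : Fin n, Fw n ((c - a : Fin n) : ℕ) = Sw n
      exact sum_shift a (fun k => Fw n k.val)
    rw [hsum]
    show Aw n = 1 + 1/2 * ((0 + Aw n + Aw n)/3 + Sw n / n)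
    have hk := key1 (n := n) (by omega)
    field_simp
    linear_combination hk
  | some a, some b =>
    have hab : a ≠ b := fun h => hij (by rw [h])
    set e : Fin n := b - a with hedef
    have hene : e ≠ 0 := sub_ne_zero.mpr (Ne.symm hab)
    have hd1 : 1 ≤ e.val := Nat.one_le_iff_ne_zero.mpr (fun h => hene (Fin.ext h))
    have hd2 : e.val ≤ n - 1 := by have := e.isLt; omega
    show Fw n ((b - a : Fin n) : ℕ) = 1 + 1 / 2 *
      (∑ k, step (wheelW n) (some a) k * tauWheel n k (some b)
      + ∑ k, step (wheelW n) (some b) k * tauWheel n (some a) k)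
    rw [sum_step_leaf hn, sum_step_leaf hn]
    show Fw n ((b - a : Fin n) : ℕ) = 1 + 1/2 *
      ((Aw n + Fw n ((b - (a+1) : Fin n) : ℕ) + Fw n ((b - (a-1) : Fin n) : ℕ))/3
      + (Aw n + Fw n ((b + 1 - a : Fin n) : ℕ) + Fw n ((b - 1 - a : Fin n) : ℕ))/3)
    have r1 : b - (a + 1) = e - 1 := by rw [hedef]; abel
    have r2 : b - (a - 1) = e + 1 := by rw [hedef]; abel
    have r3 : b + 1 - a = e + 1 := by rw [hedef]; abel
    have r4 : b - 1 - a = e - 1 := by rw [hedef]; abel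
    have r5 : b - a = e := rfl
    rw [r1, r2, r3, r4, r5]
    have hvs : ((e - 1 : Fin n) : ℕ) = e.val - 1 := by
      rw [fin_val_sub_one hn]
      simp only [if_neg (by omega : ¬ e.val = 0)]
    have hFup : Fw n ((e + 1 : Fin n) : ℕ) = Fw n (e.val + 1) := by
      rw [fin_val_add_one hn]
      by_cases hlast : e.val = n - 1
      · rw [if_pos hlast, Fw_zero]
        have : e.val + 1 = n := by omega
        rw [this, Fw_n]
      · rw [if_neg hlast]
    rw [hvs, hFup]
    have hrec := Fw_rec hd1 hd2 (by omega : 2 ≤ n)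
    linear_combination hrec

end Coal
/-! ### stepN machinery -/

section StepN
variable {V : Type*} [Fintype V] [DecidableEq V]

lemma sum_stepN_zero (w : V → V → ℝ) (k : V) (X : V → ℝ) :
    ∑ j, stepN w 0 k j * X j = X k := by
  unfold stepN
  rw [pow_zero]
  simp [Matrix.one_apply]

lemma sum_stepN_succ (w : V → V → ℝ) (m : ℕ) (k : V) (X : V → ℝ) :
    ∑ j, stepN w (m + 1) k j * X j
      = ∑ l, step w k l * ∑ j, stepN w m l j * X j := by
  have h : ∀ j, stepN w (m + 1) k j = ∑ l, step w k l * stepN w m l j := by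
    intro j
    show (stepMat w ^ (m + 1)) k j = _
    rw [pow_succ', Matrix.mul_apply]
    rfl
  calc ∑ j, stepN w (m+1) k j * X j
      = ∑ j, ∑ l, step w k l * stepN w m l j * X j := by
        refine Finset.sum_congr rfl fun j _ => ?_
        rw [h j, Finset.sum_mul]
    _ = ∑ l, ∑ j, step w k l * (stepN w m l j * X j) := by
        rw [Finset.sum_comm]
        exact Finset.sum_congr rfl fun l _ => Finset.sum_congr rfl fun j _ => mul_assoc _ _ _
    _ = ∑ l, step w k l * ∑ j, stepN w m l j * X j := by
        exact Finset.sum_congr rfl fun l _ => (Finset.mul_sum _ _ _).symm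

lemma sum_step1 (w : V → V → ℝ) (k : V) (X : V → ℝ) :
    ∑ j, stepN w 1 k j * X j = ∑ l, step w k l * X l := by
  rw [sum_stepN_succ]
  exact Finset.sum_congr rfl fun l _ => by rw [sum_stepN_zero]

end StepN

/-! ### More Fin value lemmas -/

section FinVals
variable {n : ℕ} [NeZero n]

lemma fin_val_two (hn : 3 ≤ n) : ((1 + 1 : Fin n) : ℕ) = 2 := by
  rw [fin_val_add, fin_val_one hn]
  exact Nat.mod_eq_of_lt (by omega)

lemma fin_val_three (hn : 4 ≤ n) : ((1 + 1 + 1 : Fin n) : ℕ) = 3 := by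
  rw [fin_val_add, fin_val_two (by omega), fin_val_one (by omega)]
  exact Nat.mod_eq_of_lt (by omega)

lemma fin_three_ne_zero (hn : 4 ≤ n) : (1 + 1 + 1 : Fin n) ≠ 0 := by
  intro h
  have := congrArg Fin.val h
  rw [fin_val_three hn] at this
  simp at this

lemma fin_val_neg_one (hn : 3 ≤ n) : ((-1 : Fin n) : ℕ) = n - 1 := by
  rw [fin_val_neg hn 1 (by
    intro h
    have := congrArg Fin.val h
    rw [fin_val_one hn] at this
    simp at this), fin_val_one hn]

lemma fin_val_neg_two (hn : 3 ≤ n) : ((-(1 + 1) : Fin n) : ℕ) = n - 2 := by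
  rw [fin_val_neg hn _ (fin_two_ne_zero hn), fin_val_two hn]

lemma fin_val_neg_three (hn : 4 ≤ n) : ((-(1 + 1 + 1) : Fin n) : ℕ) = n - 3 := by
  rw [fin_val_neg (by omega) _ (fin_three_ne_zero hn), fin_val_three hn]

end FinVals

/-! ### tauWalk computation for the wheel -/

section TauWalk
variable {n : ℕ} [NeZero n]

-- τ value rfl lemmas
lemma tw_nn : tauWheel n none none = 0 := rfl
lemma tw_ns (b : Fin n) : tauWheel n none (some b) = Aw n := rfl
lemma tw_sn (a : Fin n) : tauWheel n (some a) none = Aw n := rfl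
lemma tw_ss (a b : Fin n) : tauWheel n (some a) (some b) = Fw n ((b - a : Fin n) : ℕ) := rfl

lemma hub_m1 (hn : 3 ≤ n) :
    ∑ j, stepN (wheelW n) 1 none j * tauWheel n none j = Aw n := by
  rw [sum_step1, sum_step_hub]
  simp only [tw_ns, Finset.sum_const, Finset.card_univ, Fintype.card_fin, nsmul_eq_mul]
  have hn' : (n : ℝ) ≠ 0 := by positivity
  field_simp

lemma hub_step1 (hn : 3 ≤ n) (c : Fin n) :
    ∑ j, stepN (wheelW n) 1 (some c) j * tauWheel n none j = 2 * Aw n / 3 := by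
  rw [sum_step1, sum_step_leaf hn]
  simp only [tw_nn, tw_ns]
  ring

lemma hub_m2 (hn : 3 ≤ n) :
    ∑ j, stepN (wheelW n) 2 none j * tauWheel n none j = 2 * Aw n / 3 := by
  rw [sum_stepN_succ (m := 1), sum_step_hub]
  have h : ∀ c : Fin n, (∑ j, stepN (wheelW n) 1 (some c) j * tauWheel n none j)
      = 2 * Aw n / 3 := hub_step1 hn
  rw [Finset.sum_congr rfl fun c _ => h c]
  simp only [Finset.sum_const, Finset.card_univ, Fintype.card_fin, nsmul_eq_mul]
  have hn' : (n : ℝ) ≠ 0 := by positivity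
  field_simp

lemma hub_step2 (hn : 3 ≤ n) (c : Fin n) :
    ∑ j, stepN (wheelW n) 2 (some c) j * tauWheel n none j = 7 * Aw n / 9 := by
  rw [show (2:ℕ) = 1 + 1 from rfl, sum_stepN_succ, sum_step_leaf hn]
  rw [hub_m1 hn, hub_step1 hn, hub_step1 hn]
  ring

lemma hub_m3 (hn : 3 ≤ n) :
    ∑ j, stepN (wheelW n) 3 none j * tauWheel n none j = 7 * Aw n / 9 := by
  rw [show (3:ℕ) = 2 + 1 from rfl, sum_stepN_succ, sum_step_hub]
  have h : ∀ c : Fin n, (∑ j, stepN (wheelW n) 2 (some c) j * tauWheel n none j)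
      = 7 * Aw n / 9 := hub_step2 hn
  rw [Finset.sum_congr rfl fun c _ => h c]
  simp only [Finset.sum_const, Finset.card_univ, Fintype.card_fin, nsmul_eq_mul]
  have hn' : (n : ℝ) ≠ 0 := by positivity
  field_simp

-- leaf chains
lemma K1none (hn : 3 ≤ n) (a : Fin n) :
    ∑ j, stepN (wheelW n) 1 none j * tauWheel n (some a) j = Sw n / n := by
  rw [sum_step1, sum_step_hub]
  have h : ∑ b : Fin n, tauWheel n (some a) (some b) = Sw n := by
    simp only [tw_ss]
    exact sum_shift a (fun k => Fw n k.val)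
  rw [h]

lemma K1some (hn : 3 ≤ n) (a c : Fin n) :
    ∑ j, stepN (wheelW n) 1 (some c) j * tauWheel n (some a) j
      = (Aw n + Fw n ((c + 1 - a : Fin n) : ℕ) + Fw n ((c - 1 - a : Fin n) : ℕ)) / 3 := by
  rw [sum_step1, sum_step_leaf hn]
  simp only [tw_sn, tw_ss]

lemma K2none (hn : 3 ≤ n) (a : Fin n) :
    ∑ j, stepN (wheelW n) 2 none j * tauWheel n (some a) j
      = Aw n / 3 + 2 * Sw n / (3 * n) := by
  rw [sum_stepN_succ (m := 1), sum_step_hub]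
  rw [Finset.sum_congr rfl fun c _ => K1some hn a c]
  have s1 : ∑ c : Fin n, Fw n ((c + 1 - a : Fin n) : ℕ) = Sw n := by
    have h : ∀ c : Fin n, (c + 1 - a : Fin n) = c - (a - 1) := fun c => by abel
    rw [Finset.sum_congr rfl fun c _ => by rw [h c]]
    exact sum_shift (a - 1) (fun k => Fw n k.val)
  have s2 : ∑ c : Fin n, Fw n ((c - 1 - a : Fin n) : ℕ) = Sw n := by
    have h : ∀ c : Fin n, (c - 1 - a : Fin n) = c - (a + 1) := fun c => by abel
    rw [Finset.sum_congr rfl fun c _ => by rw [h c]]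
    exact sum_shift (a + 1) (fun k => Fw n k.val)
  have expand : ∀ c : Fin n,
      (Aw n + Fw n ((c + 1 - a : Fin n) : ℕ) + Fw n ((c - 1 - a : Fin n) : ℕ)) / 3
      = Aw n / 3 + Fw n ((c + 1 - a : Fin n) : ℕ) / 3 + Fw n ((c - 1 - a : Fin n) : ℕ) / 3 :=
    fun c => by ring
  have s1' : ∑ c : Fin n, Fw n ((c + 1 - a : Fin n) : ℕ) / 3 = Sw n / 3 := by
    rw [← Finset.sum_div, s1]
  have s2' : ∑ c : Fin n, Fw n ((c - 1 - a : Fin n) : ℕ) / 3 = Sw n / 3 := by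
    rw [← Finset.sum_div, s2]
  rw [Finset.sum_congr rfl fun c _ => expand c]
  rw [Finset.sum_add_distrib, Finset.sum_add_distrib, s1', s2']
  simp only [Finset.sum_const, Finset.card_univ, Fintype.card_fin, nsmul_eq_mul]
  have hn' : (n : ℝ) ≠ 0 := by positivity
  field_simp
  ring

lemma K2some (hn : 3 ≤ n) (a c : Fin n) :
    ∑ j, stepN (wheelW n) 2 (some c) j * tauWheel n (some a) j
      = (Sw n / n
        + (Aw n + Fw n ((c + 1 + 1 - a : Fin n) : ℕ) + Fw n ((c - a : Fin n) : ℕ)) / 3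
        + (Aw n + Fw n ((c - a : Fin n) : ℕ) + Fw n ((c - 1 - 1 - a : Fin n) : ℕ)) / 3) / 3 := by
  rw [sum_stepN_succ (m := 1), sum_step_leaf hn]
  rw [K1none hn, K1some hn, K1some hn]
  have e1 : (c + 1 - 1 - a : Fin n) = c - a := by abel
  have e2 : (c - 1 + 1 - a : Fin n) = c - a := by abel
  rw [e1, e2]

lemma leaf_m1 (hn : 3 ≤ n) (a : Fin n) :
    ∑ j, stepN (wheelW n) 1 (some a) j * tauWheel n (some a) j
      = (Aw n + Fw n 1 + Fw n (n - 1)) / 3 := by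
  rw [K1some hn a a]
  have e1 : (a + 1 - a : Fin n) = 1 := by abel
  have e2 : (a - 1 - a : Fin n) = -1 := by abel
  rw [e1, e2, fin_val_one hn, fin_val_neg_one hn]

lemma leaf_m2 (hn : 3 ≤ n) (a : Fin n) :
    ∑ j, stepN (wheelW n) 2 (some a) j * tauWheel n (some a) j
      = (Sw n / n + (Aw n + Fw n 2) / 3 + (Aw n + Fw n (n - 2)) / 3) / 3 := by
  rw [K2some hn a a]
  have e1 : (a + 1 + 1 - a : Fin n) = 1 + 1 := by abel
  have e2 : (a - a : Fin n) = 0 := by abel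
  have e3 : (a - 1 - 1 - a : Fin n) = -(1 + 1) := by abel
  rw [e1, e2, e3, fin_val_two hn, fin_val_neg_two hn]
  simp only [Fin.val_zero, Fw_zero]
  ring

lemma leaf_m3 (hn : 4 ≤ n) (a : Fin n) :
    ∑ j, stepN (wheelW n) 3 (some a) j * tauWheel n (some a) j
      = ((Aw n / 3 + 2 * Sw n / (3 * n))
        + (Sw n / n + (Aw n + Fw n 3 + Fw n 1) / 3 + (Aw n + Fw n 1 + Fw n (n - 1)) / 3) / 3
        + (Sw n / n + (Aw n + Fw n 1 + Fw n (n - 1)) / 3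
            + (Aw n + Fw n (n - 1) + Fw n (n - 3)) / 3) / 3) / 3 := by
  have hn3 : 3 ≤ n := by omega
  rw [show (3:ℕ) = 2 + 1 from rfl, sum_stepN_succ, sum_step_leaf hn3]
  rw [K2none hn3, K2some hn3, K2some hn3]
  have e1 : (a + 1 + 1 + 1 - a : Fin n) = 1 + 1 + 1 := by abel
  have e2 : (a + 1 - a : Fin n) = 1 := by abel
  have e3 : (a + 1 - 1 - 1 - a : Fin n) = -1 := by abel
  have e4 : (a - 1 + 1 + 1 - a : Fin n) = 1 := by abel
  have e5 : (a - 1 - a : Fin n) = -1 := by abel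
  have e6 : (a - 1 - 1 - 1 - a : Fin n) = -(1 + 1 + 1) := by abel
  rw [e1, e2, e3, e4, e5, e6, fin_val_three hn, fin_val_one hn3, fin_val_neg_one hn3,
    fin_val_neg_three hn]

-- assembling tauWalk
lemma wheel_Wtot (hn : 3 ≤ n) : Wtot (wheelW n) = 4 * n := by
  unfold Wtot
  rw [Fintype.sum_option, wheel_deg_none]
  rw [Finset.sum_congr rfl fun a _ => wheel_deg_some a hn]
  simp only [Finset.sum_const, Finset.card_univ, Fintype.card_fin, nsmul_eq_mul]
  ring

lemma wheel_statDist_none (hn : 3 ≤ n) : statDist (wheelW n) none = 1 / 4 := by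
  unfold statDist
  rw [wheel_deg_none, wheel_Wtot hn]
  have hn' : (n : ℝ) ≠ 0 := by positivity
  field_simp

lemma wheel_statDist_some (hn : 3 ≤ n) (a : Fin n) :
    statDist (wheelW n) (some a) = 3 / (4 * n) := by
  unfold statDist
  rw [wheel_deg_some a hn, wheel_Wtot hn]

lemma tauWalk_wheel (hn : 3 ≤ n) (τ : Option (Fin n) → Option (Fin n) → ℝ) (m : ℕ) :
    tauWalk (wheelW n) τ m
      = (1 / 4) * (∑ j, stepN (wheelW n) m none j * τ none j)
        + (3 / (4 * n)) * ∑ a : Fin n, (∑ j, stepN (wheelW n) m (some a) j * τ (some a) j) := by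
  unfold tauWalk
  rw [Fintype.sum_option]
  congr 1
  · rw [Finset.mul_sum]
    refine Finset.sum_congr rfl fun j _ => ?_
    rw [wheel_statDist_none hn]
    ring
  · rw [Finset.mul_sum]
    refine Finset.sum_congr rfl fun a _ => ?_
    rw [Finset.mul_sum]
    refine Finset.sum_congr rfl fun j _ => ?_
    rw [wheel_statDist_some hn a]
    ring

lemma sum_const_leaf (hn : 3 ≤ n) (v : ℝ) (f : Fin n → ℝ) (hf : ∀ a, f a = v) :
    (3 / (4 * (n:ℝ))) * ∑ a : Fin n, f a = (3 / 4) * v := by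
  rw [Finset.sum_congr rfl fun a _ => hf a]
  simp only [Finset.sum_const, Finset.card_univ, Fintype.card_fin, nsmul_eq_mul]
  have hn' : (n : ℝ) ≠ 0 := by positivity
  field_simp

lemma tauWalk1_wheel (hn : 3 ≤ n) :
    tauWalk (wheelW n) (tauWheel n) 1
      = Aw n / 4 + (3 / 4) * ((Aw n + Fw n 1 + Fw n (n - 1)) / 3) := by
  rw [tauWalk_wheel hn, hub_m1 hn,
    sum_const_leaf hn _ _ (leaf_m1 hn)]
  ring

lemma tauWalk2_wheel (hn : 3 ≤ n) :
    tauWalk (wheelW n) (tauWheel n) 2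
      = Aw n / 6
        + (3 / 4) * ((Sw n / n + (Aw n + Fw n 2) / 3 + (Aw n + Fw n (n - 2)) / 3) / 3) := by
  rw [tauWalk_wheel hn, hub_m2 hn,
    sum_const_leaf hn _ _ (leaf_m2 hn)]
  ring

lemma tauWalk3_wheel (hn : 4 ≤ n) :
    tauWalk (wheelW n) (tauWheel n) 3
      = 7 * Aw n / 36
        + (3 / 4) * (((Aw n / 3 + 2 * Sw n / (3 * n))
          + (Sw n / n + (Aw n + Fw n 3 + Fw n 1) / 3 + (Aw n + Fw n 1 + Fw n (n - 1)) / 3) / 3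
          + (Sw n / n + (Aw n + Fw n 1 + Fw n (n - 1)) / 3
              + (Aw n + Fw n (n - 1) + Fw n (n - 3)) / 3) / 3) / 3) := by
  have hn3 : 3 ≤ n := by omega
  rw [tauWalk_wheel hn3, hub_m3 hn3,
    sum_const_leaf hn3 _ _ (leaf_m3 hn)]
  ring

end TauWalk
/-! ### Limits -/

section Limits

lemma lin_frac_lim (p q : ℝ) :
    Tendsto (fun x : ℝ => (p + q * x) / (1 + x)) atTop (nhds q) := by
  have h0 : Tendsto (fun x : ℝ => 1 + x) atTop atTop :=
    tendsto_atTop_add_const_left _ 1 tendsto_id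
  have h1 : Tendsto (fun x : ℝ => (1 + x)⁻¹) atTop (nhds 0) := h0.inv_tendsto_atTop
  have h2 : Tendsto (fun x : ℝ => q + (p - q) * (1 + x)⁻¹) atTop (nhds q) := by
    have h3 : Tendsto (fun x : ℝ => q + (p - q) * (1 + x)⁻¹) atTop (nhds (q + (p - q) * 0)) :=
      tendsto_const_nhds.add (h1.const_mul (p - q))
    simpa using h3
  refine h2.congr' ?_
  filter_upwards [eventually_gt_atTop 0] with x hx
  have hx1 : 1 + x ≠ 0 := by linarith
  field_simp
  ring

lemma rtpow_atTop : Tendsto (fun n : ℕ => rt ^ n) atTop atTop :=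
  tendsto_pow_atTop_atTop_of_one_lt one_lt_rt

lemma frac_lim (p q : ℝ) :
    Tendsto (fun n : ℕ => (p + q * rt ^ n) / (1 + rt ^ n)) atTop (nhds q) :=
  (lin_frac_lim p q).comp rtpow_atTop

lemma ccw_lim : Tendsto ccw atTop (nhds ((1 + rt) / (rt - 1))) := by
  have h1 : Tendsto (fun n : ℕ => ((1 + rt) / (rt - 1)) * ((-1 + 1 * rt ^ n) / (1 + rt ^ n)))
      atTop (nhds (((1 + rt) / (rt - 1)) * 1)) := (frac_lim (-1) 1).const_mul _
  rw [mul_one] at h1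
  refine h1.congr fun n => ?_
  unfold ccw
  rw [div_mul_div_comm]
  ring

lemma ccw_div_lim : Tendsto (fun n : ℕ => ccw n / n) atTop (nhds 0) :=
  ccw_lim.div_atTop tendsto_natCast_atTop_atTop

lemma Aw_lim : Tendsto Aw atTop (nhds 15) := by
  have h1 : Tendsto (fun n : ℕ => (15 - 9 * (ccw n / n)) / (1 + 3 * (ccw n / n)))
      atTop (nhds ((15 - 9 * 0) / (1 + 3 * 0))) :=
    Tendsto.div (tendsto_const_nhds.sub (ccw_div_lim.const_mul 9))
      (tendsto_const_nhds.add (ccw_div_lim.const_mul 3)) (by norm_num)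
  norm_num at h1
  refine h1.congr' ?_
  filter_upwards [eventually_ge_atTop 1] with n hn
  have hn' : (0:ℝ) < n := by exact_mod_cast Nat.pos_of_ne_zero (by omega)
  have hc := ccw_nonneg n
  have hd1 : (0:ℝ) < 1 + 3 * (ccw n / n) := by positivity
  have hd2 : (0:ℝ) < (n : ℝ) + 3 * ccw n := by positivity
  unfold Aw
  rw [div_eq_div_iff hd1.ne' hd2.ne']
  field_simp
  try ring

lemma Sdivn_lim : Tendsto (fun n : ℕ => Sw n / n) atTop (nhds 18) := by
  have h1 : Tendsto (fun n : ℕ => (3 + Aw n) * (1 - ccw n / n))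
      atTop (nhds ((3 + 15) * (1 - 0))) :=
    (tendsto_const_nhds.add Aw_lim).mul (tendsto_const_nhds.sub ccw_div_lim)
  norm_num at h1
  refine h1.congr' ?_
  filter_upwards [eventually_ge_atTop 1] with n hn
  have hn' : (0:ℝ) < n := by exact_mod_cast Nat.pos_of_ne_zero (by omega)
  rw [Sw_eq hn]
  field_simp
  try ring

lemma q_lim (d : ℕ) :
    Tendsto (fun n : ℕ => (rt ^ d + rt ^ (n - d)) / (1 + rt ^ n)) atTop (nhds (1 / rt ^ d)) := by
  have h1 := frac_lim (rt ^ d) (1 / rt ^ d)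
  refine h1.congr' ?_
  filter_upwards [eventually_ge_atTop d] with n hn
  have h2 : rt ^ (n - d) = rt ^ n / rt ^ d := pow_sub₀ rt rt_pos.ne' hn
  rw [h2]
  ring_nf

lemma Fw_lim (d : ℕ) :
    Tendsto (fun n : ℕ => Fw n d) atTop (nhds (18 * (1 - 1 / rt ^ d))) := by
  have h1 : Tendsto (fun n : ℕ => (3 + Aw n) * (1 - (rt ^ d + rt ^ (n - d)) / (1 + rt ^ n)))
      atTop (nhds ((3 + 15) * (1 - 1 / rt ^ d))) :=
    (tendsto_const_nhds.add Aw_lim).mul (tendsto_const_nhds.sub (q_lim d))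
  have h2 : (3 + (15:ℝ)) * (1 - 1 / rt ^ d) = 18 * (1 - 1 / rt ^ d) := by norm_num
  rw [h2] at h1
  exact h1.congr fun n => rfl

lemma inv_rt1 : (1:ℝ) / rt = (3 - Real.sqrt 5) / 2 := by
  rw [div_eq_iff rt_pos.ne']
  unfold rt
  linear_combination (1/4) * sqrt5_sq

lemma inv_rt2 : (1:ℝ) / rt ^ 2 = (7 - 3 * Real.sqrt 5) / 2 := by
  have h : (1:ℝ) / rt ^ 2 = ((1:ℝ) / rt) ^ 2 := by rw [div_pow, one_pow]
  rw [h, inv_rt1]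
  linear_combination (1/4) * sqrt5_sq

lemma inv_rt3 : (1:ℝ) / rt ^ 3 = 9 - 4 * Real.sqrt 5 := by
  have h : (1:ℝ) / rt ^ 3 = ((1:ℝ) / rt) ^ 3 := by rw [div_pow, one_pow]
  rw [h, inv_rt1]
  linear_combination ((9 - Real.sqrt 5)/8) * sqrt5_sq

lemma Fw1_lim : Tendsto (fun n : ℕ => Fw n 1) atTop (nhds (9 * (Real.sqrt 5 - 1))) := by
  have h := Fw_lim 1
  rw [show (18:ℝ) * (1 - 1 / rt ^ 1) = 9 * (Real.sqrt 5 - 1) by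
    rw [pow_one, inv_rt1]; ring] at h
  exact h

lemma Fw2_lim : Tendsto (fun n : ℕ => Fw n 2) atTop (nhds (27 * Real.sqrt 5 - 45)) := by
  have h := Fw_lim 2
  rw [show (18:ℝ) * (1 - 1 / rt ^ 2) = 27 * Real.sqrt 5 - 45 by
    rw [inv_rt2]; ring] at h
  exact h

lemma Fw3_lim : Tendsto (fun n : ℕ => Fw n 3) atTop (nhds (72 * Real.sqrt 5 - 144)) := by
  have h := Fw_lim 3
  rw [show (18:ℝ) * (1 - 1 / rt ^ 3) = 72 * Real.sqrt 5 - 144 by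
    rw [inv_rt3]; ring] at h
  exact h

end Limits

/-! ### Clean tauWalk expressions & their limits -/

def W1 (n : ℕ) : ℝ := Aw n / 4 + (3 / 4) * ((Aw n + Fw n 1 + Fw n 1) / 3)

def W2 (n : ℕ) : ℝ :=
  Aw n / 6 + (3 / 4) * ((Sw n / n + (Aw n + Fw n 2) / 3 + (Aw n + Fw n 2) / 3) / 3)

def W3 (n : ℕ) : ℝ :=
  7 * Aw n / 36
    + (3 / 4) * (((Aw n / 3 + 2 * Sw n / (3 * n))
      + (Sw n / n + (Aw n + Fw n 3 + Fw n 1) / 3 + (Aw n + Fw n 1 + Fw n 1) / 3) / 3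
      + (Sw n / n + (Aw n + Fw n 1 + Fw n 1) / 3 + (Aw n + Fw n 1 + Fw n 3) / 3) / 3) / 3)

section WheelW
variable {n : ℕ} [NeZero n]

lemma tauWalk1_W (hn : 7 ≤ n) : tauWalk (wheelW n) (tauWheel n) 1 = W1 n := by
  rw [tauWalk1_wheel (by omega : 3 ≤ n), Fw_refl n 1 (by omega)]
  rfl

lemma tauWalk2_W (hn : 7 ≤ n) : tauWalk (wheelW n) (tauWheel n) 2 = W2 n := by
  rw [tauWalk2_wheel (by omega : 3 ≤ n), Fw_refl n 2 (by omega)]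
  rfl

lemma tauWalk3_W (hn : 7 ≤ n) : tauWalk (wheelW n) (tauWheel n) 3 = W3 n := by
  rw [tauWalk3_wheel (by omega : 4 ≤ n), Fw_refl n 1 (by omega), Fw_refl n 3 (by omega)]
  rfl

end WheelW

lemma W1_lim : Tendsto W1 atTop (nhds (3 + 9 / 2 * Real.sqrt 5)) := by
  have h := (Aw_lim.div_const 4).add
    ((((Aw_lim.add Fw1_lim).add Fw1_lim).div_const 3).const_mul (3 / 4))
  have hval : (15:ℝ) / 4 + 3 / 4 * ((15 + 9 * (Real.sqrt 5 - 1) + 9 * (Real.sqrt 5 - 1)) / 3)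
      = 3 + 9 / 2 * Real.sqrt 5 := by ring
  rw [hval] at h
  exact h.congr fun n => rfl

lemma W2_lim : Tendsto W2 atTop (nhds ((4 + 9 * Real.sqrt 5) / 2)) := by
  have h := (Aw_lim.div_const 6).add
    ((((Sdivn_lim.add ((Aw_lim.add Fw2_lim).div_const 3)).add
      ((Aw_lim.add Fw2_lim).div_const 3)).div_const 3).const_mul (3 / 4))
  have hval : (15:ℝ) / 6 + 3 / 4 * ((18 + (15 + (27 * Real.sqrt 5 - 45)) / 3
      + (15 + (27 * Real.sqrt 5 - 45)) / 3) / 3) = (4 + 9 * Real.sqrt 5) / 2 := by ring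
  rw [hval] at h
  exact h.congr fun n => rfl

lemma W3_lim : Tendsto W3 atTop (nhds (7 / 3 + 11 / 2 * Real.sqrt 5)) := by
  have hs2 : Tendsto (fun n : ℕ => 2 * Sw n / (3 * (n:ℝ))) atTop (nhds 12) := by
    have h := Sdivn_lim.const_mul (2/3 : ℝ)
    have hval : (2/3 : ℝ) * 18 = 12 := by norm_num
    rw [hval] at h
    exact h.congr fun n => by ring
  have hX : Tendsto (fun k : ℕ => Aw k / 3 + 2 * Sw k / (3 * (k:ℝ))) atTop
      (nhds ((15:ℝ) / 3 + 12)) := (Aw_lim.div_const 3).add hs2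
  have hY : Tendsto (fun k : ℕ => Sw k / (k:ℝ) + (Aw k + Fw k 3 + Fw k 1) / 3
      + (Aw k + Fw k 1 + Fw k 1) / 3) atTop
      (nhds ((18:ℝ) + (15 + (72 * Real.sqrt 5 - 144) + 9 * (Real.sqrt 5 - 1)) / 3
        + (15 + 9 * (Real.sqrt 5 - 1) + 9 * (Real.sqrt 5 - 1)) / 3)) :=
    (Sdivn_lim.add (((Aw_lim.add Fw3_lim).add Fw1_lim).div_const 3)).add
      (((Aw_lim.add Fw1_lim).add Fw1_lim).div_const 3)
  have hZ : Tendsto (fun k : ℕ => Sw k / (k:ℝ) + (Aw k + Fw k 1 + Fw k 1) / 3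
      + (Aw k + Fw k 1 + Fw k 3) / 3) atTop
      (nhds ((18:ℝ) + (15 + 9 * Real.sqrt 5 - 9 + 9 * (Real.sqrt 5 - 1) - 9 * (Real.sqrt 5 - 1) + 9 * (Real.sqrt 5 - 1)) / 3
        + (15 + 9 * (Real.sqrt 5 - 1) + (72 * Real.sqrt 5 - 144)) / 3)) := by
    have h := (Sdivn_lim.add (((Aw_lim.add Fw1_lim).add Fw1_lim).div_const 3)).add
      (((Aw_lim.add Fw1_lim).add Fw3_lim).div_const 3)
    convert h using 2
    ring
  have hmul : Tendsto (fun k : ℕ => (3:ℝ)/4 * (((Aw k / 3 + 2 * Sw k / (3 * (k:ℝ)))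
      + (Sw k / (k:ℝ) + (Aw k + Fw k 3 + Fw k 1) / 3 + (Aw k + Fw k 1 + Fw k 1) / 3) / 3
      + (Sw k / (k:ℝ) + (Aw k + Fw k 1 + Fw k 1) / 3 + (Aw k + Fw k 1 + Fw k 3) / 3) / 3) / 3))
      atTop (nhds ((3:ℝ)/4 * ((((15:ℝ) / 3 + 12)
      + ((18:ℝ) + (15 + (72 * Real.sqrt 5 - 144) + 9 * (Real.sqrt 5 - 1)) / 3
        + (15 + 9 * (Real.sqrt 5 - 1) + 9 * (Real.sqrt 5 - 1)) / 3) / 3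
      + ((18:ℝ) + (15 + 9 * Real.sqrt 5 - 9 + 9 * (Real.sqrt 5 - 1) - 9 * (Real.sqrt 5 - 1) + 9 * (Real.sqrt 5 - 1)) / 3
        + (15 + 9 * (Real.sqrt 5 - 1) + (72 * Real.sqrt 5 - 144)) / 3) / 3) / 3))) :=
    (((hX.add (hY.div_const 3)).add (hZ.div_const 3)).div_const 3).const_mul (3/4)
  have h := ((Aw_lim.const_mul 7).div_const 36).add hmul
  have hval : 7 * (15:ℝ) / 36 + (3:ℝ)/4 * ((((15:ℝ) / 3 + 12)
      + ((18:ℝ) + (15 + (72 * Real.sqrt 5 - 144) + 9 * (Real.sqrt 5 - 1)) / 3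
        + (15 + 9 * (Real.sqrt 5 - 1) + 9 * (Real.sqrt 5 - 1)) / 3) / 3
      + ((18:ℝ) + (15 + 9 * Real.sqrt 5 - 9 + 9 * (Real.sqrt 5 - 1) - 9 * (Real.sqrt 5 - 1) + 9 * (Real.sqrt 5 - 1)) / 3
        + (15 + 9 * (Real.sqrt 5 - 1) + (72 * Real.sqrt 5 - 144)) / 3) / 3) / 3)
      = 7 / 3 + 11 / 2 * Real.sqrt 5 := by ring
  rw [hval] at h
  exact h.congr fun n => rfl
/-- if `bc n` is the critical benefit-to-cost ratio
`τ^{(2)}/(τ^{(3)} − τ^{(1)})` of the wheel graph with `n ≥ 3` leaves, then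
`bc n → (429 + 90√5)/82` as `n → ∞`. -/
theorem wheel_bc_limit (bc : ℕ → ℝ)
    (hbc : ∀ (n : ℕ) [NeZero n], 3 ≤ n →
      ∀ τ : Option (Fin n) → Option (Fin n) → ℝ,
        IsCoalescent (wheelW n) τ →
        bc n = tauWalk (wheelW n) τ 2 /
          (tauWalk (wheelW n) τ 3 - tauWalk (wheelW n) τ 1)) :
    Tendsto bc atTop (nhds ((429 + 90 * Real.sqrt 5) / 82)) := by
  have hev : ∀ᶠ m in atTop, bc m = W2 m / (W3 m - W1 m) := by
    filter_upwards [eventually_ge_atTop 7] with m hm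
    haveI : NeZero m := ⟨by omega⟩
    rw [hbc m (by omega) (tauWheel m) (tauWheel_coal (by omega)),
      tauWalk1_W hm, tauWalk2_W hm, tauWalk3_W hm]
  have heq : (7 / 3 + 11 / 2 * Real.sqrt 5) - (3 + 9 / 2 * Real.sqrt 5)
      = Real.sqrt 5 - 2 / 3 := by ring
  have hne : (7 / 3 + 11 / 2 * Real.sqrt 5) - (3 + 9 / 2 * Real.sqrt 5) ≠ 0 := by
    rw [heq]
    have := sqrt5_gt_two
    intro hc
    linarith
  have hdiv := W2_lim.div (W3_lim.sub W1_lim) hne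
  have hval : ((4 + 9 * Real.sqrt 5) / 2)
      / ((7 / 3 + 11 / 2 * Real.sqrt 5) - (3 + 9 / 2 * Real.sqrt 5))
      = (429 + 90 * Real.sqrt 5) / 82 := by
    rw [div_eq_div_iff hne (by norm_num : (82:ℝ) ≠ 0)]
    linear_combination (-90) * sqrt5_sq
  rw [hval] at hdiv
  exact Tendsto.congr' (EventuallyEq.symm hev) hdiv

end EvoGraph
end
end

section
/- Let N ≥ 4 be even and let G be the complete graph on N vertices with a weighted perfect matching: the vertices are partitioned into N/2 pairs, w_{ij} = w > 0 if i and j are partners in the matching, w_{ij} = 1 for all other distinct pairs i, j, and w_{ii} = 0. Then, provided (w − 2)² ≠ N, the critical benefit-to-cost ratio of G satisfies (b/c)* = (w − 2 + N)² / ((w − 2)² − N). In particular (b/c)* is positive if and only if w > √N + 2, and (b/c)* → 1 as w → ∞. -/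
open Finset Filter Asymptotics

noncomputable section

namespace EvoGraph

variable {V : Type*} [Fintype V] [DecidableEq V]

/-- The complete graph on `N = 2k` vertices with a weighted perfect matching:
the partner of `(i, b)` is `(i, !b)`; partners are joined by a weight-`wgt`
edge, all other distinct pairs by weight-1 edges, and there are no self-loops. -/
def matchW (k : ℕ) (wgt : ℝ) : Fin k × Bool → Fin k × Bool → ℝ :=
  fun x y => if x.1 = y.1 then (if x.2 = y.2 then 0 else wgt) else 1

-- ==== helpers ====

def pr {k : ℕ} (x : Fin k × Bool) : Fin k × Bool := (x.1, !x.2)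

variable {k : ℕ}

lemma pr_pr (x : Fin k × Bool) : pr (pr x) = x := by simp [pr]

lemma pr_ne (x : Fin k × Bool) : pr x ≠ x := by
  simp [pr, Prod.ext_iff]

lemma pr_inj {x y : Fin k × Bool} (h : pr x = pr y) : x = y := by
  simpa [pr, Prod.ext_iff] using h

lemma pr_eq_iff {x y : Fin k × Bool} : pr x = y ↔ x = pr y := by
  constructor
  · rintro rfl; exact (pr_pr x).symm
  · rintro rfl; exact pr_pr y

lemma matchW_eq (wgt : ℝ) (i j : Fin k × Bool) :
    matchW k wgt i j = if j = i then 0 else if j = pr i then wgt else 1 := by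
  obtain ⟨i1, i2⟩ := i; obtain ⟨j1, j2⟩ := j
  simp only [matchW, pr, Prod.mk.injEq]
  by_cases h : i1 = j1 <;> cases i2 <;> cases j2 <;> simp [h, eq_comm]

lemma card_univ_V : (Finset.univ : Finset (Fin k × Bool)).card = 2 * k := by
  simp [Finset.card_univ, Fintype.card_prod, mul_comm]

lemma sum_three (i : Fin k × Bool) (f : Fin k × Bool → ℝ) (C : ℝ)
    (hC : ∀ j, j ≠ i → j ≠ pr i → f j = C) (hk : 1 ≤ k) :
    ∑ j, f j = f i + f (pr i) + ((2 * k : ℝ) - 2) * C := by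
  classical
  have hsub : ({i, pr i} : Finset (Fin k × Bool)) ⊆ univ := subset_univ _
  rw [← Finset.sum_sdiff hsub]
  have hcardp : ({i, pr i} : Finset (Fin k × Bool)).card = 2 := by
    rw [Finset.card_insert_of_notMem (by simp only [Finset.mem_singleton]; exact (pr_ne i).symm), Finset.card_singleton]
  have h1 : ∑ j ∈ ({i, pr i} : Finset (Fin k × Bool)), f j = f i + f (pr i) := by
    rw [Finset.sum_insert (by simp only [Finset.mem_singleton]; exact (pr_ne i).symm), Finset.sum_singleton]
  have h2 : ∑ j ∈ univ \ ({i, pr i} : Finset (Fin k × Bool)), f j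
      = ((2 * k : ℝ) - 2) * C := by
    rw [Finset.sum_congr rfl (fun j hj => by
      simp only [Finset.mem_sdiff, Finset.mem_insert, Finset.mem_singleton] at hj
      exact hC j (fun h => hj.2 (Or.inl h)) (fun h => hj.2 (Or.inr h)))]
    rw [Finset.sum_const, Finset.card_sdiff_of_subset hsub, card_univ_V, hcardp, nsmul_eq_mul]
    have : ((2 * k - 2 : ℕ) : ℝ) = (2 * k : ℝ) - 2 := by
      have : 2 ≤ 2 * k := by omega
      push_cast [Nat.cast_sub this]; ring
    rw [this]
  rw [h2, h1]; ring

lemma sum_five (i j : Fin k × Bool) (hji : j ≠ i) (hjp : j ≠ pr i)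
    (f : Fin k × Bool → ℝ) (C : ℝ)
    (hC : ∀ l, l ≠ i → l ≠ pr i → l ≠ j → l ≠ pr j → f l = C) (hk : 2 ≤ k) :
    ∑ l, f l = f i + f (pr i) + f j + f (pr j) + ((2 * k : ℝ) - 4) * C := by
  classical
  have hpji : pr j ≠ i := fun h => hjp (by rw [← h, pr_pr])
  have hpjpi : pr j ≠ pr i := fun h => hji (pr_inj h)
  have hpjj : pr j ≠ j := pr_ne j
  have hsub : ({i, pr i, j, pr j} : Finset (Fin k × Bool)) ⊆ univ := subset_univ _
  rw [← Finset.sum_sdiff hsub]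
  have hpi_ne : pr i ≠ i := pr_ne i
  have h1 : ∑ l ∈ ({i, pr i, j, pr j} : Finset (Fin k × Bool)), f l
      = f i + f (pr i) + f j + f (pr j) := by
    rw [Finset.sum_insert (by simp [Ne.symm hpi_ne, Ne.symm hji, Ne.symm hpji]),
        Finset.sum_insert (by simp [hjp.symm ∘ Eq.symm, Ne.symm hpjpi]; exact fun h => hjp h.symm),
        Finset.sum_insert (by simp [Ne.symm hpjj]), Finset.sum_singleton]
    ring
  have hcardp : ({i, pr i, j, pr j} : Finset (Fin k × Bool)).card = 4 := by
    rw [Finset.card_insert_of_notMem (by simp [Ne.symm hpi_ne, Ne.symm hji, Ne.symm hpji]),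
        Finset.card_insert_of_notMem (by
          simp only [Finset.mem_insert, Finset.mem_singleton]
          push_neg
          exact ⟨fun h => hjp h.symm, Ne.symm hpjpi⟩),
        Finset.card_insert_of_notMem (by simp [Ne.symm hpjj]), Finset.card_singleton]
  have h2 : ∑ l ∈ univ \ ({i, pr i, j, pr j} : Finset (Fin k × Bool)), f l
      = ((2 * k : ℝ) - 4) * C := by
    rw [Finset.sum_congr rfl (fun l hl => by
      simp only [Finset.mem_sdiff, Finset.mem_insert, Finset.mem_singleton] at hl
      push_neg at hl
      exact hC l hl.2.1 hl.2.2.1 hl.2.2.2.1 hl.2.2.2.2)]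
    rw [Finset.sum_const, Finset.card_sdiff_of_subset hsub, card_univ_V, hcardp, nsmul_eq_mul]
    have : ((2 * k - 4 : ℕ) : ℝ) = (2 * k : ℝ) - 4 := by
      have : 4 ≤ 2 * k := by omega
      push_cast [Nat.cast_sub this]; ring
    rw [this]
  rw [h2, h1]; ring


-- ==== the matching graph ====

def dC (k : ℕ) (wgt : ℝ) : ℝ := wgt + 2 * k - 2
def bC (k : ℕ) (wgt : ℝ) : ℝ := dC k wgt * (dC k wgt + 1) / (2 * wgt + 2 * k - 2)
def aC (k : ℕ) (wgt : ℝ) : ℝ := 2 * bC k wgt - dC k wgt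

/-- Candidate coalescence times. -/
def tauStar (k : ℕ) (wgt : ℝ) : Fin k × Bool → Fin k × Bool → ℝ :=
  fun i j => if j = i then 0 else if j = pr i then aC k wgt else bC k wgt

variable {wgt : ℝ}

lemma dC_pos (hk : 2 ≤ k) (hw : 0 < wgt) : 0 < dC k wgt := by
  have h4 : (4 : ℝ) ≤ 2 * k := by exact_mod_cast (by omega : (4:ℕ) ≤ 2 * k)
  unfold dC; nlinarith

lemma D2_pos (hk : 2 ≤ k) (hw : 0 < wgt) : 0 < 2 * wgt + 2 * k - 2 := by
  have h4 : (4 : ℝ) ≤ 2 * k := by exact_mod_cast (by omega : (4:ℕ) ≤ 2 * k)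
  nlinarith

lemma deg_matchW (hk : 2 ≤ k) (i : Fin k × Bool) :
    deg (matchW k wgt) i = dC k wgt := by
  unfold deg
  rw [sum_three i (fun j => matchW k wgt i j) 1
    (fun j hji hjp => by rw [matchW_eq, if_neg hji, if_neg hjp]) (by omega)]
  rw [matchW_eq, matchW_eq, if_pos rfl, if_neg (pr_ne i), if_pos rfl]
  unfold dC; ring

lemma step_eq (hk : 2 ≤ k) (i j : Fin k × Bool) :
    step (matchW k wgt) i j
      = (if j = i then 0 else if j = pr i then wgt else 1) / dC k wgt := by
  rw [step, deg_matchW hk, matchW_eq]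

lemma step_pos (hk : 2 ≤ k) (hw : 0 < wgt) {i j : Fin k × Bool} (h : j ≠ i) :
    0 < step (matchW k wgt) i j := by
  rw [step_eq hk, if_neg h]
  have hd := dC_pos hk hw
  by_cases h2 : j = pr i
  · rw [if_pos h2]; positivity
  · rw [if_neg h2]; positivity

lemma step_nonneg (hk : 2 ≤ k) (hw : 0 < wgt) (i j : Fin k × Bool) :
    0 ≤ step (matchW k wgt) i j := by
  by_cases h : j = i
  · rw [step_eq hk, if_pos h]; simp
  · exact (step_pos hk hw h).le

lemma step_row_sum (hk : 2 ≤ k) (hw : 0 < wgt) (i : Fin k × Bool) :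
    ∑ j, step (matchW k wgt) i j = 1 := by
  unfold step
  rw [← Finset.sum_div, ← deg]
  exact div_self (by rw [deg_matchW hk]; exact (dC_pos hk hw).ne')


lemma tauStar_self (i : Fin k × Bool) : tauStar k wgt i i = 0 := if_pos rfl

lemma tauStar_pr (i : Fin k × Bool) : tauStar k wgt i (pr i) = aC k wgt := by
  unfold tauStar; rw [if_neg (pr_ne i), if_pos rfl]

lemma tauStar_other {i j : Fin k × Bool} (h1 : j ≠ i) (h2 : j ≠ pr i) :
    tauStar k wgt i j = bC k wgt := by
  unfold tauStar; rw [if_neg h1, if_neg h2]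

lemma tauStar_symm (i j : Fin k × Bool) : tauStar k wgt i j = tauStar k wgt j i := by
  by_cases h1 : j = i
  · subst h1; rfl
  · by_cases h2 : j = pr i
    · subst h2
      have h := tauStar_pr (k := k) (wgt := wgt) (pr i)
      rw [pr_pr] at h
      rw [tauStar_pr, h]
    · rw [tauStar_other h1 h2, tauStar_other (Ne.symm h1)
        (fun h : i = pr j => h2 (pr_eq_iff.mpr h).symm)]

lemma step_self (hk : 2 ≤ k) (i : Fin k × Bool) : step (matchW k wgt) i i = 0 := by
  rw [step_eq hk, if_pos rfl, zero_div]

lemma step_pr (hk : 2 ≤ k) (i : Fin k × Bool) :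
    step (matchW k wgt) i (pr i) = wgt / dC k wgt := by
  rw [step_eq hk, if_neg (pr_ne i), if_pos rfl]

lemma step_other (hk : 2 ≤ k) {i j : Fin k × Bool} (h1 : j ≠ i) (h2 : j ≠ pr i) :
    step (matchW k wgt) i j = 1 / dC k wgt := by
  rw [step_eq hk, if_neg h1, if_neg h2]

lemma tauStar_coalescent (hk : 2 ≤ k) (hw : 0 < wgt) :
    IsCoalescent (matchW k wgt) (tauStar k wgt) := by
  have hd : dC k wgt ≠ 0 := (dC_pos hk hw).ne'
  have hD : 2 * wgt + 2 * (k : ℝ) - 2 ≠ 0 := (D2_pos hk hw).ne'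
  refine ⟨tauStar_symm, tauStar_self, fun i j hij => ?_⟩
  by_cases hp : j = pr i
  · subst hp
    rw [sum_three i (fun l => step (matchW k wgt) i l * tauStar k wgt l (pr i) +
          step (matchW k wgt) (pr i) l * tauStar k wgt i l)
        ((1 / dC k wgt) * bC k wgt + (1 / dC k wgt) * bC k wgt)
        (fun l hl1 hl2 => by
          rw [step_other hk hl1 hl2, step_other hk hl2 (by rw [pr_pr]; exact hl1),
            tauStar_symm l (pr i), tauStar_other hl2 (by rw [pr_pr]; exact hl1),
            tauStar_other hl1 hl2]) (by omega)]
    have e1 : step (matchW k wgt) i i * tauStar k wgt i (pr i) +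
        step (matchW k wgt) (pr i) i * tauStar k wgt i i = 0 := by
      rw [step_self hk, tauStar_self]; ring
    have e2 : step (matchW k wgt) i (pr i) * tauStar k wgt (pr i) (pr i) +
        step (matchW k wgt) (pr i) (pr i) * tauStar k wgt i (pr i) = 0 := by
      rw [step_self hk, tauStar_self]; ring
    rw [e1, e2, tauStar_pr]
    have hd' : wgt + 2 * (k : ℝ) - 2 ≠ 0 := hd
    have hD' : 2 * wgt + 2 * (k : ℝ) - 2 ≠ 0 := hD
    have hD'' : wgt + (k : ℝ) - 1 ≠ 0 := fun h => hD (by linarith)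
    unfold aC bC dC
    field_simp
    ring
  · have hpji : pr j ≠ i := fun h => hp (by rw [← h, pr_pr])
    have hpjpi : pr j ≠ pr i := fun h => hij (pr_inj h).symm
    have hji : j ≠ i := Ne.symm hij
    rw [sum_five i j hji hp (fun l => step (matchW k wgt) i l * tauStar k wgt l j +
          step (matchW k wgt) j l * tauStar k wgt i l)
        ((1 / dC k wgt) * bC k wgt + (1 / dC k wgt) * bC k wgt)
        (fun l hl1 hl2 hl3 hl4 => by
          rw [step_other hk hl1 hl2, step_other hk hl3 hl4,
            tauStar_symm l j, tauStar_other hl3 hl4,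
            tauStar_other hl1 hl2]) hk]
    -- evaluate the four special terms
    have e1 : step (matchW k wgt) i i * tauStar k wgt i j +
        step (matchW k wgt) j i * tauStar k wgt i i = 0 := by
      rw [step_self hk, tauStar_self]; ring
    have e2 : step (matchW k wgt) i (pr i) * tauStar k wgt (pr i) j +
        step (matchW k wgt) j (pr i) * tauStar k wgt i (pr i) = 0 +
        ((wgt / dC k wgt) * bC k wgt + (1 / dC k wgt) * aC k wgt) := by
      rw [step_pr hk, step_other hk (Ne.symm hp) (Ne.symm hpjpi),
        tauStar_symm (pr i) j, tauStar_other (Ne.symm hp) (Ne.symm hpjpi),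
        tauStar_pr]
      ring
    have e3 : step (matchW k wgt) i j * tauStar k wgt j j +
        step (matchW k wgt) j j * tauStar k wgt i j = 0 := by
      rw [step_self hk, tauStar_self]; ring
    have e4 : step (matchW k wgt) i (pr j) * tauStar k wgt (pr j) j +
        step (matchW k wgt) j (pr j) * tauStar k wgt i (pr j) = 0 +
        ((1 / dC k wgt) * aC k wgt + (wgt / dC k wgt) * bC k wgt) := by
      rw [step_pr hk, step_other hk hpji hpjpi,
        tauStar_symm (pr j) j, tauStar_pr,
        tauStar_other hpji hpjpi]
      ring
    rw [e1, e2, e3, e4, tauStar_other hji hp]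
    have hd' : wgt + 2 * (k : ℝ) - 2 ≠ 0 := hd
    have hD' : 2 * wgt + 2 * (k : ℝ) - 2 ≠ 0 := hD
    have hD'' : wgt + (k : ℝ) - 1 ≠ 0 := fun h => hD (by linarith)
    unfold aC bC dC
    field_simp
    ring


lemma coalescent_eq_tauStar (hk : 2 ≤ k) (hw : 0 < wgt)
    {τ : Fin k × Bool → Fin k × Bool → ℝ} (hτ : IsCoalescent (matchW k wgt) τ) :
    τ = tauStar k wgt := by
  obtain ⟨hsym, hdiag, heq⟩ := hτ
  obtain ⟨hsym', hdiag', heq'⟩ := tauStar_coalescent (wgt := wgt) hk hw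
  set δ : Fin k × Bool → Fin k × Bool → ℝ :=
    fun i j => τ i j - tauStar k wgt i j with hδ
  have hVne : Nonempty (Fin k) := ⟨⟨0, by omega⟩⟩
  have hne : (univ : Finset ((Fin k × Bool) × (Fin k × Bool))).Nonempty :=
    univ_nonempty
  obtain ⟨p, -, hmax⟩ := Finset.exists_max_image univ (fun q => |δ q.1 q.2|) hne
  have hmax' : ∀ i j, |δ i j| ≤ |δ p.1 p.2| := fun i j => hmax (i, j) (mem_univ _)
  have hδdiag : ∀ i, δ i i = 0 := fun i => by simp [hδ, hdiag i, hdiag' i]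
  have hm0 : |δ p.1 p.2| ≤ 0 := by
    by_cases hpp : p.1 = p.2
    · rw [hpp, hδdiag]; simp
    · set i := p.1 with hi
      set j := p.2 with hj
      set m := |δ i j| with hm
      have hmnn : 0 ≤ m := abs_nonneg _
      have hδeq : δ i j = (1/2) * ∑ l, (step (matchW k wgt) i l * δ l j
          + step (matchW k wgt) j l * δ i l) := by
        have expand : ∀ l, step (matchW k wgt) i l * δ l j + step (matchW k wgt) j l * δ i l
            = (step (matchW k wgt) i l * τ l j + step (matchW k wgt) j l * τ i l)
              - (step (matchW k wgt) i l * tauStar k wgt l j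
                 + step (matchW k wgt) j l * tauStar k wgt i l) := by
          intro l; simp only [hδ]; ring
        rw [Finset.sum_congr rfl (fun l _ => expand l), Finset.sum_sub_distrib]
        simp only [hδ]
        rw [heq i j hpp, heq' i j hpp]
        ring
      have tri : ∀ l, |step (matchW k wgt) i l * δ l j + step (matchW k wgt) j l * δ i l|
          ≤ step (matchW k wgt) i l * |δ l j| + step (matchW k wgt) j l * |δ i l| := fun l => by
        calc |step (matchW k wgt) i l * δ l j + step (matchW k wgt) j l * δ i l|
            ≤ |step (matchW k wgt) i l * δ l j| + |step (matchW k wgt) j l * δ i l| :=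
              abs_add_le _ _
          _ = _ := by
              rw [abs_mul, abs_mul, abs_of_nonneg (step_nonneg hk hw i l),
                abs_of_nonneg (step_nonneg hk hw j l)]
      have hb1 : ∑ l, step (matchW k wgt) i l * |δ l j|
          ≤ (1 - step (matchW k wgt) i j) * m := by
        have hz : step (matchW k wgt) i j * |δ j j| = 0 := by rw [hδdiag]; simp
        rw [← Finset.sum_erase_add univ _ (mem_univ j), hz, add_zero]
        calc ∑ l ∈ univ.erase j, step (matchW k wgt) i l * |δ l j|
            ≤ ∑ l ∈ univ.erase j, step (matchW k wgt) i l * m :=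
              Finset.sum_le_sum fun l _ =>
                mul_le_mul_of_nonneg_left (hmax' l j) (step_nonneg hk hw i l)
          _ = (∑ l ∈ univ.erase j, step (matchW k wgt) i l) * m := by
              rw [Finset.sum_mul]
          _ = (1 - step (matchW k wgt) i j) * m := by
              have hrow := step_row_sum hk hw i
              rw [← Finset.sum_erase_add univ _ (mem_univ j)] at hrow
              have h' : ∑ l ∈ univ.erase j, step (matchW k wgt) i l
                  = 1 - step (matchW k wgt) i j := by linarith
              rw [h']
      have hb2 : ∑ l, step (matchW k wgt) j l * |δ i l|
          ≤ (1 - step (matchW k wgt) j i) * m := by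
        have hz : step (matchW k wgt) j i * |δ i i| = 0 := by rw [hδdiag]; simp
        rw [← Finset.sum_erase_add univ _ (mem_univ i), hz, add_zero]
        calc ∑ l ∈ univ.erase i, step (matchW k wgt) j l * |δ i l|
            ≤ ∑ l ∈ univ.erase i, step (matchW k wgt) j l * m :=
              Finset.sum_le_sum fun l _ =>
                mul_le_mul_of_nonneg_left (hmax' i l) (step_nonneg hk hw j l)
          _ = (∑ l ∈ univ.erase i, step (matchW k wgt) j l) * m := by
              rw [Finset.sum_mul]
          _ = (1 - step (matchW k wgt) j i) * m := by
              have hrow := step_row_sum hk hw j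
              rw [← Finset.sum_erase_add univ _ (mem_univ i)] at hrow
              have h' : ∑ l ∈ univ.erase i, step (matchW k wgt) j l
                  = 1 - step (matchW k wgt) j i := by linarith
              rw [h']
      have hchain : m ≤ (1/2) * ((1 - step (matchW k wgt) i j) * m
          + (1 - step (matchW k wgt) j i) * m) := by
        calc m = |(1/2) * ∑ l, (step (matchW k wgt) i l * δ l j
              + step (matchW k wgt) j l * δ i l)| := by rw [hm, hδeq]
          _ = (1/2) * |∑ l, (step (matchW k wgt) i l * δ l j
              + step (matchW k wgt) j l * δ i l)| := by
              rw [abs_mul, abs_of_nonneg (by norm_num : (0:ℝ) ≤ (1:ℝ)/2)]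
          _ ≤ (1/2) * ∑ l, |step (matchW k wgt) i l * δ l j
              + step (matchW k wgt) j l * δ i l| :=
              mul_le_mul_of_nonneg_left (Finset.abs_sum_le_sum_abs _ _) (by norm_num)
          _ ≤ (1/2) * ∑ l, (step (matchW k wgt) i l * |δ l j|
              + step (matchW k wgt) j l * |δ i l|) :=
              mul_le_mul_of_nonneg_left (Finset.sum_le_sum fun l _ => tri l) (by norm_num)
          _ = (1/2) * ((∑ l, step (matchW k wgt) i l * |δ l j|)
              + ∑ l, step (matchW k wgt) j l * |δ i l|) := by
              rw [Finset.sum_add_distrib]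
          _ ≤ _ := by
              have h1 := hb1; have h2 := hb2; linarith
      have hsij : 0 < step (matchW k wgt) i j := step_pos hk hw (Ne.symm hpp)
      have hsji : 0 < step (matchW k wgt) j i := step_pos hk hw hpp
      have key : (step (matchW k wgt) i j + step (matchW k wgt) j i) * m ≤ 0 := by
        nlinarith [hchain]
      by_contra hcon
      push_neg at hcon
      exact absurd key (not_le.mpr (mul_pos (add_pos hsij hsji) hcon))
  refine funext fun i => funext fun j => ?_
  have h0 := le_trans (hmax' i j) hm0
  have := abs_nonpos_iff.mp h0
  simpa [hδ, sub_eq_zero] using this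


-- ==== powers of the step matrix ====

lemma step_pr' (hk : 2 ≤ k) (i : Fin k × Bool) :
    step (matchW k wgt) (pr i) i = wgt / dC k wgt := by
  have h := step_pr (wgt := wgt) hk (pr i)
  rwa [pr_pr] at h

lemma stepN_one (i j : Fin k × Bool) :
    stepN (matchW k wgt) 1 i j = step (matchW k wgt) i j := by
  rw [stepN, pow_one]; rfl

lemma stepN_two (i j : Fin k × Bool) :
    stepN (matchW k wgt) 2 i j
      = ∑ l, step (matchW k wgt) i l * step (matchW k wgt) l j := by
  rw [stepN, pow_two, Matrix.mul_apply]; rfl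

lemma stepN_three (i j : Fin k × Bool) :
    stepN (matchW k wgt) 3 i j
      = ∑ l, stepN (matchW k wgt) 2 i l * step (matchW k wgt) l j := by
  rw [stepN, pow_succ, Matrix.mul_apply]; rfl

lemma P2_self (hk : 2 ≤ k) (hw : 0 < wgt) (i : Fin k × Bool) :
    stepN (matchW k wgt) 2 i i = (wgt ^ 2 + 2 * k - 2) / dC k wgt ^ 2 := by
  have hd := (dC_pos hk hw).ne'
  rw [stepN_two, sum_three i _ ((1 / dC k wgt) * (1 / dC k wgt))
    (fun l hl1 hl2 => by
      rw [step_other hk hl1 hl2,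
        step_other hk (Ne.symm hl1) (fun h => hl2 (pr_eq_iff.mp h.symm))]) (by omega)]
  rw [step_self hk, step_pr hk, step_pr' hk]
  field_simp
  all_goals first
    | ring1
    | exact Or.inl (by ring1)
    | exact Or.inl trivial

lemma P2_pr (hk : 2 ≤ k) (hw : 0 < wgt) (i : Fin k × Bool) :
    stepN (matchW k wgt) 2 i (pr i) = (2 * k - 2) / dC k wgt ^ 2 := by
  have hd := (dC_pos hk hw).ne'
  rw [stepN_two, sum_three i _ ((1 / dC k wgt) * (1 / dC k wgt))
    (fun l hl1 hl2 => by
      rw [step_other hk hl1 hl2,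
        step_other hk (Ne.symm hl2) (fun h => hl1 (pr_inj h).symm)]) (by omega)]
  rw [step_self hk, step_self hk]
  field_simp
  all_goals first
    | ring1
    | exact Or.inl (by ring1)
    | exact Or.inl trivial

lemma P2_other (hk : 2 ≤ k) (hw : 0 < wgt) {i j : Fin k × Bool}
    (h1 : j ≠ i) (h2 : j ≠ pr i) :
    stepN (matchW k wgt) 2 i j = (2 * wgt + 2 * k - 4) / dC k wgt ^ 2 := by
  have hd := (dC_pos hk hw).ne'
  have hpji : pr j ≠ i := fun h => h2 (by rw [← h, pr_pr])
  have hpjpi : pr j ≠ pr i := fun h => h1 (pr_inj h)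
  rw [stepN_two, sum_five i j h1 h2 _ ((1 / dC k wgt) * (1 / dC k wgt))
    (fun l hl1 hl2 hl3 hl4 => by
      rw [step_other hk hl1 hl2,
        step_other hk (Ne.symm hl3) (fun h => hl4 (pr_eq_iff.mp h.symm))]) hk]
  rw [step_self hk, step_self hk, step_pr hk, step_pr' hk,
    step_other hk h2 (by rw [pr_pr]; exact h1),
    step_other hk hpji hpjpi]
  field_simp
  all_goals first
    | ring1
    | exact Or.inl (by ring1)
    | exact Or.inl trivial

lemma P3_pr (hk : 2 ≤ k) (hw : 0 < wgt) (i : Fin k × Bool) :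
    stepN (matchW k wgt) 3 i (pr i)
      = (wgt * (wgt ^ 2 + 2 * k - 2) + (2 * k - 2) * (2 * wgt + 2 * k - 4))
        / dC k wgt ^ 3 := by
  have hd := (dC_pos hk hw).ne'
  rw [stepN_three, sum_three i _
    (((2 * wgt + 2 * k - 4) / dC k wgt ^ 2) * (1 / dC k wgt))
    (fun l hl1 hl2 => by
      rw [P2_other hk hw hl1 hl2,
        step_other hk (Ne.symm hl2) (fun h => hl1 (pr_inj h).symm)]) (by omega)]
  rw [P2_self hk hw, step_pr hk, P2_pr hk hw, step_self hk]
  field_simp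
  all_goals first
    | ring1
    | exact Or.inl (by ring1)
    | exact Or.inl trivial

lemma P3_other (hk : 2 ≤ k) (hw : 0 < wgt) {i j : Fin k × Bool}
    (h1 : j ≠ i) (h2 : j ≠ pr i) :
    stepN (matchW k wgt) 3 i j
      = ((wgt ^ 2 + 2 * k - 2) + (2 * k - 2) + (2 * wgt + 2 * k - 4) * wgt
          + (2 * k - 4) * (2 * wgt + 2 * k - 4)) / dC k wgt ^ 3 := by
  have hd := (dC_pos hk hw).ne'
  have hpji : pr j ≠ i := fun h => h2 (by rw [← h, pr_pr])
  have hpjpi : pr j ≠ pr i := fun h => h1 (pr_inj h)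
  rw [stepN_three, sum_five i j h1 h2 _
    (((2 * wgt + 2 * k - 4) / dC k wgt ^ 2) * (1 / dC k wgt))
    (fun l hl1 hl2 hl3 hl4 => by
      rw [P2_other hk hw hl1 hl2,
        step_other hk (Ne.symm hl3) (fun h => hl4 (pr_eq_iff.mp h.symm))]) hk]
  rw [P2_self hk hw, P2_pr hk hw, P2_other hk hw hpji hpjpi, step_self hk, step_pr' hk,
    step_other hk h1 h2,
    step_other hk h2 (by rw [pr_pr]; exact h1)]
  field_simp
  all_goals first
    | ring1
    | exact Or.inl (by ring1)
    | exact Or.inl trivial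


-- ==== tauWalk values ====

lemma statDist_eq (hk : 2 ≤ k) (hw : 0 < wgt) (i : Fin k × Bool) :
    statDist (matchW k wgt) i = 1 / (2 * (k : ℝ)) := by
  have hd := (dC_pos hk hw).ne'
  have hW : Wtot (matchW k wgt) = dC k wgt * (2 * (k : ℝ)) := by
    unfold Wtot
    rw [Finset.sum_congr rfl (fun i _ => deg_matchW hk i), Finset.sum_const,
      card_univ_V, nsmul_eq_mul]
    push_cast; ring
  rw [statDist, deg_matchW hk, hW, ← div_div, div_self hd]

lemma tauWalk_const (hk : 2 ≤ k) (hw : 0 < wgt) (n : ℕ) (T : ℝ)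
    (hinner : ∀ i, ∑ j, stepN (matchW k wgt) n i j * tauStar k wgt i j = T) :
    tauWalk (matchW k wgt) (tauStar k wgt) n = T := by
  have hk0 : (2 * (k : ℝ)) ≠ 0 := by
    have : (0:ℝ) < (k:ℝ) := by exact_mod_cast (by omega : 0 < k)
    positivity
  unfold tauWalk
  calc ∑ i, ∑ j, statDist (matchW k wgt) i * stepN (matchW k wgt) n i j
        * tauStar k wgt i j
      = ∑ _i : Fin k × Bool, (1 / (2 * (k:ℝ))) * T := by
        refine Finset.sum_congr rfl (fun i _ => ?_)
        rw [← hinner i, Finset.mul_sum]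
        refine Finset.sum_congr rfl (fun j _ => ?_)
        rw [statDist_eq hk hw, mul_assoc]
    _ = T := by
        rw [Finset.sum_const, card_univ_V, nsmul_eq_mul]
        push_cast
        field_simp

lemma tauWalk_one (hk : 2 ≤ k) (hw : 0 < wgt) :
    tauWalk (matchW k wgt) (tauStar k wgt) 1
      = (wgt * aC k wgt + (2 * (k:ℝ) - 2) * bC k wgt) / dC k wgt := by
  have hd := (dC_pos hk hw).ne'
  refine tauWalk_const hk hw 1 _ (fun i => ?_)
  rw [sum_three i _ ((1 / dC k wgt) * bC k wgt)
    (fun j hj1 hj2 => by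
      rw [stepN_one, step_other hk hj1 hj2, tauStar_other hj1 hj2]) (by omega)]
  rw [tauStar_self, tauStar_pr, stepN_one, stepN_one, step_pr hk]
  field_simp
  all_goals first
    | ring1
    | exact Or.inl (by ring1)
    | exact Or.inl trivial

lemma tauWalk_two (hk : 2 ≤ k) (hw : 0 < wgt) :
    tauWalk (matchW k wgt) (tauStar k wgt) 2
      = ((2 * (k:ℝ) - 2) / dC k wgt ^ 2) * (wgt - 2 + 2 * (k:ℝ)) ^ 2 := by
  have hd := (dC_pos hk hw).ne'
  have hD := (D2_pos hk hw).ne'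
  refine tauWalk_const hk hw 2 _ (fun i => ?_)
  rw [sum_three i _ (((2 * wgt + 2 * k - 4) / dC k wgt ^ 2) * bC k wgt)
    (fun j hj1 hj2 => by
      rw [P2_other hk hw hj1 hj2, tauStar_other hj1 hj2]) (by omega)]
  rw [tauStar_self, tauStar_pr, P2_self hk hw, P2_pr hk hw]
  have hd' : wgt + 2 * (k : ℝ) - 2 ≠ 0 := hd
  have hD' : 2 * wgt + 2 * (k : ℝ) - 2 ≠ 0 := hD
  have hD'' : wgt + (k : ℝ) - 1 ≠ 0 := fun h => hD (by linarith)
  unfold aC bC dC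
  field_simp
  all_goals first
    | ring1
    | exact Or.inl (by ring1)
    | exact Or.inl trivial

lemma tauWalk_three (hk : 2 ≤ k) (hw : 0 < wgt) :
    tauWalk (matchW k wgt) (tauStar k wgt) 3
      = ((wgt * (wgt ^ 2 + 2 * k - 2) + (2 * k - 2) * (2 * wgt + 2 * k - 4)) * aC k wgt
          + (2 * (k:ℝ) - 2) * ((wgt ^ 2 + 2 * k - 2) + (2 * k - 2) + (2 * wgt + 2 * k - 4) * wgt
            + (2 * k - 4) * (2 * wgt + 2 * k - 4)) * bC k wgt) / dC k wgt ^ 3 := by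
  have hd := (dC_pos hk hw).ne'
  refine tauWalk_const hk hw 3 _ (fun i => ?_)
  rw [sum_three i _ ((((wgt ^ 2 + 2 * k - 2) + (2 * k - 2) + (2 * wgt + 2 * k - 4) * wgt
        + (2 * k - 4) * (2 * wgt + 2 * k - 4)) / dC k wgt ^ 3) * bC k wgt)
    (fun j hj1 hj2 => by
      rw [P3_other hk hw hj1 hj2, tauStar_other hj1 hj2]) (by omega)]
  rw [tauStar_self, tauStar_pr, P3_pr hk hw]
  field_simp
  all_goals first
    | ring1
    | exact Or.inl (by ring1)
    | exact Or.inl trivial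

lemma tauWalk_sub (hk : 2 ≤ k) (hw : 0 < wgt) :
    tauWalk (matchW k wgt) (tauStar k wgt) 3 - tauWalk (matchW k wgt) (tauStar k wgt) 1
      = ((2 * (k:ℝ) - 2) / dC k wgt ^ 2) * ((wgt - 2) ^ 2 - 2 * (k:ℝ)) := by
  have hd := (dC_pos hk hw).ne'
  have hD := (D2_pos hk hw).ne'
  rw [tauWalk_three hk hw, tauWalk_one hk hw]
  have hd' : wgt + 2 * (k : ℝ) - 2 ≠ 0 := hd
  have hD' : 2 * wgt + 2 * (k : ℝ) - 2 ≠ 0 := hD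
  have hD'' : wgt + (k : ℝ) - 1 ≠ 0 := fun h => hD (by linarith)
  unfold aC bC dC
  field_simp
  all_goals first
    | ring1
    | exact Or.inl (by ring1)
    | exact Or.inl trivial

/-- for the complete graph on `N = 2k ≥ 4` vertices with a
perfect matching of weight `w > 0`, provided `(w − 2)² ≠ N`,
`(b/c)* = (w − 2 + N)²/((w − 2)² − N)`; this is positive iff `w > √N + 2`, and
it tends to `1` as `w → ∞`. -/
theorem matching_bc (k : ℕ) (hk : 2 ≤ k) (wgt : ℝ) (hw : 0 < wgt)
    (hne : (wgt - 2) ^ 2 ≠ (2 * k : ℝ))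
    (τ : Fin k × Bool → Fin k × Bool → ℝ)
    (hτ : IsCoalescent (matchW k wgt) τ) :
    tauWalk (matchW k wgt) τ 2 /
        (tauWalk (matchW k wgt) τ 3 - tauWalk (matchW k wgt) τ 1) =
      (wgt - 2 + (2 * k : ℝ)) ^ 2 / ((wgt - 2) ^ 2 - (2 * k : ℝ)) ∧
    (0 < (wgt - 2 + (2 * k : ℝ)) ^ 2 / ((wgt - 2) ^ 2 - (2 * k : ℝ)) ↔
      Real.sqrt (2 * k : ℝ) + 2 < wgt) ∧
    Tendsto
      (fun w' : ℝ => (w' - 2 + (2 * k : ℝ)) ^ 2 / ((w' - 2) ^ 2 - (2 * k : ℝ)))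
      atTop (nhds 1) := by
  have hτeq := coalescent_eq_tauStar hk hw hτ
  subst hτeq
  have hd := (dC_pos hk hw).ne'
  have h4 : (4:ℝ) ≤ 2 * (k:ℝ) := by exact_mod_cast (by omega : (4:ℕ) ≤ 2 * k)
  have hA : ((2 * (k:ℝ) - 2) / dC k wgt ^ 2) ≠ 0 :=
    div_ne_zero (by nlinarith) (pow_ne_zero _ hd)
  have hsqnn := Real.sqrt_nonneg (2 * (k:ℝ))
  have hsq := Real.sq_sqrt (show (0:ℝ) ≤ 2 * (k:ℝ) by positivity)
  refine ⟨?_, ?_, ?_⟩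
  · rw [tauWalk_two hk hw, tauWalk_sub hk hw, mul_div_mul_left _ _ hA]
  · have hnum0 : 0 < wgt - 2 + (2 * (k:ℝ)) := by nlinarith
    have hnum : 0 < (wgt - 2 + (2 * (k:ℝ))) ^ 2 := by positivity
    constructor
    · intro h
      have hden : 0 < (wgt - 2) ^ 2 - 2 * (k:ℝ) := by
        rcases div_pos_iff.mp h with ⟨-, h2⟩ | ⟨h1, -⟩
        · exact h2
        · nlinarith
      have hs : Real.sqrt (2 * (k:ℝ)) < wgt - 2 := by
        by_contra hcon
        push_neg at hcon
        by_cases hx : 0 ≤ wgt - 2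
        · have h1 := pow_le_pow_left₀ hx hcon 2
          rw [hsq] at h1
          linarith
        · push_neg at hx
          nlinarith
      linarith
    · intro h
      have hx : Real.sqrt (2 * (k:ℝ)) < wgt - 2 := by linarith
      have hden : 0 < (wgt - 2) ^ 2 - 2 * (k:ℝ) := by nlinarith
      exact div_pos hnum hden
  · have hg : Tendsto (fun w' : ℝ => (1 + (2 * (k:ℝ) - 2) / w') ^ 2
        / ((1 - 2 / w') ^ 2 - (2 * (k:ℝ)) / w' ^ 2)) atTop (nhds 1) := by
      have hc1 : Tendsto (fun _ : ℝ => (1:ℝ)) atTop (nhds 1) := tendsto_const_nhds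
      have h0 : Tendsto (fun w' : ℝ => (2 * (k:ℝ) - 2) / w') atTop (nhds 0) :=
        Tendsto.div_atTop tendsto_const_nhds tendsto_id
      have hnum : Tendsto (fun w' : ℝ => (1 + (2 * (k:ℝ) - 2) / w') ^ 2)
          atTop (nhds 1) := by
        have := (hc1.add h0).pow 2
        norm_num at this
        exact this
      have h2 : Tendsto (fun w' : ℝ => (2:ℝ) / w') atTop (nhds 0) :=
        Tendsto.div_atTop tendsto_const_nhds tendsto_id
      have h3 : Tendsto (fun w' : ℝ => (2 * (k:ℝ)) / w' ^ 2) atTop (nhds 0) :=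
        Tendsto.div_atTop tendsto_const_nhds (tendsto_pow_atTop two_ne_zero)
      have hden : Tendsto (fun w' : ℝ => (1 - 2 / w') ^ 2 - (2 * (k:ℝ)) / w' ^ 2)
          atTop (nhds 1) := by
        have := ((hc1.sub h2).pow 2).sub h3
        norm_num at this
        exact this
      have := hnum.div hden one_ne_zero
      norm_num at this
      exact this
    refine hg.congr' ?_
    filter_upwards [eventually_gt_atTop (Real.sqrt (2 * (k:ℝ)) + 2)] with w' hw'
    have hw0' : 0 < w' := by nlinarith
    have hw0 : w' ≠ 0 := hw0'.ne'
    have hB0 : 0 < (w' - 2) ^ 2 - 2 * (k:ℝ) := by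
      nlinarith [mul_pos (show (0:ℝ) < w' - 2 - Real.sqrt (2 * (k:ℝ)) by linarith)
        (show (0:ℝ) < w' - 2 + Real.sqrt (2 * (k:ℝ)) by linarith)]
    have hB : ((w' - 2) ^ 2 - 2 * (k:ℝ)) ≠ 0 := hB0.ne'
    have hnum2 : (1 + (2 * (k:ℝ) - 2) / w') ^ 2
        = (w' - 2 + 2 * (k:ℝ)) ^ 2 / w' ^ 2 := by
      rw [show (1 + (2 * (k:ℝ) - 2) / w') = (w' - 2 + 2 * (k:ℝ)) / w' from by
        field_simp; ring1, div_pow]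
    have hden2 : (1 - 2 / w') ^ 2 - (2 * (k:ℝ)) / w' ^ 2
        = ((w' - 2) ^ 2 - 2 * (k:ℝ)) / w' ^ 2 := by
      field_simp
      try ring1
    rw [hnum2, hden2, div_eq_div_iff (div_ne_zero hB (pow_ne_zero 2 hw0)) hB]
    ring1

end EvoGraph
end
end
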